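/- arXiv:1412.1634 — 9 statements merged into one kernel-verified Lean document; each statement's English description precedes it below -/
import Mathlib

section
/- Let 0<q<1 and let a,b,c be real numbers with a>b>c>0 and b>1. Then for all x ≥ 0 the Turán type inequality [φ(q^a,q^b;q,x)]² ≤ φ(q^a,q^{b-c};q,x)·φ(q^a,q^{b+c};q,x) holds. -/
/-- The q-shifted factorial `(a;q)_n = ∏_{k=0}^{n-1} (1 - a q^k)`. -/
noncomputable def qPoch (q a : ℝ) (n : ℕ) : ℝ :=
  ∏ k ∈ Finset.range n, (1 - a * q ^ k)

/-- The q-Kummer confluent hypergeometric function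
`φ(q^a, q^c; q, x) = Σ_{n=0}^∞ (q^a;q)_n (1-q)^n / ((q^c;q)_n (q;q)_n) x^n`. -/
noncomputable def qKummer (q a c x : ℝ) : ℝ :=
  ∑' n : ℕ, qPoch q (q ^ a) n * (1 - q) ^ n / (qPoch q (q ^ c) n * qPoch q q n) * x ^ n

lemma factor_pos {q c : ℝ} (hq0 : 0 < q) (hq1 : q < 1) (hc0 : 0 ≤ c) (hc1 : c < 1) (k : ℕ) :
    0 < 1 - c * q ^ k := by
  have h1 : q ^ k ≤ 1 := pow_le_one₀ hq0.le hq1.le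
  nlinarith [pow_pos hq0 k]

lemma qPoch_pos {q c : ℝ} (hq0 : 0 < q) (hq1 : q < 1) (hc0 : 0 ≤ c) (hc1 : c < 1) (n : ℕ) :
    0 < qPoch q c n :=
  Finset.prod_pos fun k _ => factor_pos hq0 hq1 hc0 hc1 k

lemma qPoch_le_one {q c : ℝ} (hq0 : 0 < q) (hq1 : q < 1) (hc0 : 0 ≤ c) (hc1 : c < 1) (n : ℕ) :
    qPoch q c n ≤ 1 :=
  Finset.prod_le_one (fun k _ => (factor_pos hq0 hq1 hc0 hc1 k).le)
    (fun k _ => by nlinarith [pow_pos hq0 k])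

lemma one_sub_sum_le_prod {f : ℕ → ℝ} (h0 : ∀ k, 0 ≤ f k) (h1 : ∀ k, f k ≤ 1) (n : ℕ) :
    1 - ∑ k ∈ Finset.range n, f k ≤ ∏ k ∈ Finset.range n, (1 - f k) := by
  induction n with
  | zero => simp
  | succ n ih =>
    rw [Finset.prod_range_succ, Finset.sum_range_succ]
    have hp0 : (0:ℝ) ≤ ∏ k ∈ Finset.range n, (1 - f k) :=
      Finset.prod_nonneg fun k _ => by linarith [h1 k]
    have hp1 : ∏ k ∈ Finset.range n, (1 - f k) ≤ 1 :=
      Finset.prod_le_one (fun k _ => by linarith [h1 k]) (fun k _ => by linarith [h0 k])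
    nlinarith [h0 n]

lemma qPoch_anti {q c : ℝ} (hq0 : 0 < q) (hq1 : q < 1) (hc0 : 0 ≤ c) (hc1 : c < 1)
    {m n : ℕ} (h : m ≤ n) : qPoch q c n ≤ qPoch q c m := by
  induction n with
  | zero => simp_all
  | succ n ih =>
    rcases Nat.lt_or_ge m (n+1) with hlt | hge
    · have := ih (Nat.lt_succ_iff.mp hlt)
      have h2 : qPoch q c (n+1) = qPoch q c n * (1 - c * q ^ n) := Finset.prod_range_succ _ _
      nlinarith [qPoch_pos hq0 hq1 hc0 hc1 n, factor_pos hq0 hq1 hc0 hc1 n,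
        qPoch_le_one hq0 hq1 hc0 hc1 n,
        mul_nonneg (mul_nonneg (qPoch_pos hq0 hq1 hc0 hc1 n).le hc0) (pow_pos hq0 n).le]
    · have : m = n + 1 := le_antisymm h hge
      simp [this]

lemma qPoch_lower {q c : ℝ} (hq0 : 0 < q) (hq1 : q < 1) (hc0 : 0 ≤ c) (hc1 : c < 1) :
    ∃ ε > 0, ∀ n, ε ≤ qPoch q c n := by
  obtain ⟨N, hN⟩ : ∃ N : ℕ, c * q ^ N ≤ (1 - q) / 2 := by
    have hc1' : (0:ℝ) < c + 1 := by linarith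
    obtain ⟨N, hN⟩ := exists_pow_lt_of_lt_one
      (div_pos (div_pos (by linarith : (0:ℝ) < 1 - q) two_pos) hc1') hq1
    refine ⟨N, ?_⟩
    have := mul_le_mul_of_nonneg_left hN.le hc0
    have hd : c / (c + 1) ≤ 1 := by rw [div_le_one hc1']; linarith
    have h2 : c * ((1 - q) / 2 / (c + 1)) ≤ (1 - q) / 2 := by
      calc c * ((1 - q) / 2 / (c + 1)) = (1 - q) / 2 * (c / (c + 1)) := by ring
        _ ≤ (1 - q) / 2 * 1 := mul_le_mul_of_nonneg_left hd (by linarith)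
        _ = (1 - q) / 2 := mul_one _
    linarith
  have hPN := qPoch_pos hq0 hq1 hc0 hc1 N
  refine ⟨qPoch q c N / 2, by linarith, fun n => ?_⟩
  rcases le_or_gt n N with hle | hlt
  · have := qPoch_anti hq0 hq1 hc0 hc1 hle
    have := qPoch_pos hq0 hq1 hc0 hc1 N
    linarith
  · have hsplit : qPoch q c n = qPoch q c N * ∏ k ∈ Finset.Ico N n, (1 - c * q ^ k) := by
      rw [qPoch, qPoch, Finset.prod_range_mul_prod_Ico _ hlt.le]
    have hre : ∏ k ∈ Finset.Ico N n, (1 - c * q ^ k)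
        = ∏ j ∈ Finset.range (n - N), (1 - (c * q ^ N) * q ^ j) := by
      rw [Finset.prod_Ico_eq_prod_range]
      exact Finset.prod_congr rfl fun j _ => by rw [pow_add]; ring_nf
    have hf0 : ∀ j : ℕ, 0 ≤ c * q ^ N * q ^ j := fun j => by positivity
    have hf1 : ∀ j : ℕ, c * q ^ N * q ^ j ≤ 1 := fun j => by
      have : q ^ j ≤ 1 := pow_le_one₀ hq0.le hq1.le
      nlinarith [hf0 j, pow_pos hq0 j]
    have hw := one_sub_sum_le_prod hf0 hf1 (n - N)
    have hsum : ∑ j ∈ Finset.range (n - N), c * q ^ N * q ^ j ≤ 1 / 2 := by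
      rw [← Finset.mul_sum]
      have h1q : (0:ℝ) < 1 - q := by linarith
      have hg : ∑ j ∈ Finset.range (n - N), q ^ j ≤ 1 / (1 - q) := by
        have key := geom_sum_mul q (n - N)
        rw [le_div_iff₀ h1q]
        nlinarith [pow_pos hq0 (n - N)]
      calc c * q ^ N * ∑ j ∈ Finset.range (n - N), q ^ j
          ≤ (1 - q) / 2 * (1 / (1 - q)) := by
            apply mul_le_mul hN hg (Finset.sum_nonneg fun j _ => by positivity) (by linarith)
        _ = 1 / 2 := by
            rw [div_mul_div_comm]
            rw [div_eq_div_iff (by nlinarith) (by norm_num : (2:ℝ) ≠ 0)]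
            ring
    have hP := qPoch_pos hq0 hq1 hc0 hc1 N
    rw [hsplit, hre]
    nlinarith [one_sub_sum_le_prod hf0 hf1 (n - N)]

lemma qPoch_mono {q c c' : ℝ} (hq0 : 0 < q) (hq1 : q < 1) (hc0 : 0 ≤ c') (hcc : c' ≤ c)
    (hc1 : c < 1) (n : ℕ) : qPoch q c n ≤ qPoch q c' n := by
  apply Finset.prod_le_prod (fun k _ => (factor_pos hq0 hq1 (hc0.trans hcc) hc1 k).le)
  intro k _
  have := (pow_pos hq0 k).le
  nlinarith

lemma qPoch_turan {q r s y : ℝ} (hq0 : 0 < q) (hq1 : q < 1)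
    (hr0 : 0 ≤ r) (hr1 : r < 1) (hs0 : 0 ≤ s) (hs1 : s < 1) (hy0 : 0 ≤ y) (hy1 : y < 1)
    (hrs : r * s = y ^ 2) (hamgm : 2 * y ≤ r + s) (n : ℕ) :
    qPoch q r n * qPoch q s n ≤ (qPoch q y n) ^ 2 := by
  rw [qPoch, qPoch, qPoch, ← Finset.prod_mul_distrib, ← Finset.prod_pow]
  apply Finset.prod_le_prod
  · intro k _
    exact mul_nonneg (factor_pos hq0 hq1 hr0 hr1 k).le (factor_pos hq0 hq1 hs0 hs1 k).le
  · intro k _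
    have hk := (pow_pos hq0 k).le
    nlinarith [sq_nonneg (q ^ k), mul_le_mul_of_nonneg_right hamgm hk]

noncomputable def qTerm (q a t x : ℝ) (n : ℕ) : ℝ :=
  qPoch q (q ^ a) n * (1 - q) ^ n / (qPoch q (q ^ t) n * qPoch q q n) * x ^ n

lemma qKummer_eq (q a t x : ℝ) : qKummer q a t x = ∑' n, qTerm q a t x n := rfl

lemma qTerm_rw {q a t x : ℝ} (n : ℕ) (h1 : qPoch q (q ^ t) n ≠ 0) (h2 : qPoch q q n ≠ 0) :
    qTerm q a t x n
      = (qPoch q (q ^ a) n * (1 - q) ^ n * x ^ n / qPoch q q n) / qPoch q (q ^ t) n := by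
  unfold qTerm
  ring

theorem statement_1 (q a b c : ℝ) (hq0 : 0 < q) (hq1 : q < 1)
    (hab : a > b) (hbc : b > c) (hc : c > 0) (hb1 : b > 1)
    (x : ℝ) (hx : 0 ≤ x) :
    (qKummer q a b x) ^ 2 ≤ qKummer q a (b - c) x * qKummer q a (b + c) x := by
  have hrp : ∀ t : ℝ, 0 < t → 0 ≤ q ^ t ∧ q ^ t < 1 := fun t ht =>
    ⟨(Real.rpow_pos_of_pos hq0 t).le, Real.rpow_lt_one hq0.le hq1 ht⟩
  have ha' := hrp a (by linarith)
  have hb' := hrp b (by linarith)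
  have hv' := hrp (b - c) (by linarith)
  have hw' := hrp (b + c) (by linarith)
  have h1q : (0:ℝ) < 1 - q := by linarith
  have hPb := fun n => qPoch_pos hq0 hq1 hb'.1 hb'.2 n
  have hPv := fun n => qPoch_pos hq0 hq1 hv'.1 hv'.2 n
  have hPw := fun n => qPoch_pos hq0 hq1 hw'.1 hw'.2 n
  have hPq := fun n => qPoch_pos hq0 hq1 hq0.le hq1 n
  have hPa := fun n => qPoch_pos hq0 hq1 ha'.1 ha'.2 n
  -- the shared numerator
  set S : ℕ → ℝ := fun n => qPoch q (q ^ a) n * (1 - q) ^ n * x ^ n / qPoch q q n with hS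
  have hS0 : ∀ n, 0 ≤ S n := fun n =>
    div_nonneg (mul_nonneg (mul_nonneg (hPa n).le (by positivity)) (pow_nonneg hx n)) (hPq n).le
  set u : ℕ → ℝ := qTerm q a b x with hu
  set v : ℕ → ℝ := qTerm q a (b - c) x with hv
  set w : ℕ → ℝ := qTerm q a (b + c) x with hw
  have hue : ∀ n, u n = S n / qPoch q (q ^ b) n := fun n =>
    qTerm_rw n (hPb n).ne' (hPq n).ne'
  have hve : ∀ n, v n = S n / qPoch q (q ^ (b - c)) n := fun n =>
    qTerm_rw n (hPv n).ne' (hPq n).ne'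
  have hwe : ∀ n, w n = S n / qPoch q (q ^ (b + c)) n := fun n =>
    qTerm_rw n (hPw n).ne' (hPq n).ne'
  have hu0 : ∀ n, 0 ≤ u n := fun n => (hue n) ▸ div_nonneg (hS0 n) (hPb n).le
  have hv0 : ∀ n, 0 ≤ v n := fun n => (hve n) ▸ div_nonneg (hS0 n) (hPv n).le
  have hw0 : ∀ n, 0 ≤ w n := fun n => (hwe n) ▸ div_nonneg (hS0 n) (hPw n).le
  -- AM-GM facts for the exponents
  have hmul : q ^ (b - c) * q ^ (b + c) = (q ^ b) ^ 2 := by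
    rw [pow_two, ← Real.rpow_add hq0, ← Real.rpow_add hq0]; ring_nf
  have hamgm : 2 * q ^ b ≤ q ^ (b - c) + q ^ (b + c) := by
    have hsq := sq_nonneg (Real.sqrt (q ^ (b - c)) - Real.sqrt (q ^ (b + c)))
    have h1 : Real.sqrt (q ^ (b - c)) ^ 2 = q ^ (b - c) := Real.sq_sqrt hv'.1
    have h2 : Real.sqrt (q ^ (b + c)) ^ 2 = q ^ (b + c) := Real.sq_sqrt hw'.1
    have h3 : Real.sqrt (q ^ (b - c)) * Real.sqrt (q ^ (b + c)) = q ^ b := by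
      rw [← Real.sqrt_mul hv'.1, hmul, Real.sqrt_sq hb'.1]
    nlinarith
  have hPturan : ∀ n, qPoch q (q ^ (b - c)) n * qPoch q (q ^ (b + c)) n
      ≤ (qPoch q (q ^ b) n) ^ 2 :=
    qPoch_turan hq0 hq1 hv'.1 hv'.2 hw'.1 hw'.2 hb'.1 hb'.2 hmul hamgm
  -- pointwise Turán inequality for the coefficients
  have hturan : ∀ n, u n ^ 2 ≤ v n * w n := by
    intro n
    rw [hue, hve, hwe, div_pow, div_mul_div_comm, ← pow_two]
    exact div_le_div_of_nonneg_left (sq_nonneg _) (mul_pos (hPv n) (hPw n)) (hPturan n)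
  -- comparison w ≤ u
  have hwu : ∀ n, w n ≤ u n := by
    intro n
    rw [hue, hwe]
    refine div_le_div_of_nonneg_left (hS0 n) (hPb n) ?_
    exact qPoch_mono hq0 hq1 hw'.1
      (Real.rpow_le_rpow_of_exponent_ge hq0 hq1.le (by linarith : b ≤ b + c)) hb'.2 n
  rw [qKummer_eq, qKummer_eq, qKummer_eq, ← hu, ← hv, ← hw]
  by_cases hsu : Summable u
  · obtain ⟨ε, hε, hεle⟩ := qPoch_lower hq0 hq1 hv'.1 hv'.2
    have hvu : ∀ n, v n ≤ ε⁻¹ * u n := by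
      intro n
      rw [hue, hve]
      have e1 : ε⁻¹ * (S n / qPoch q (q ^ b) n) = S n / (ε * qPoch q (q ^ b) n) := by
        have h₁ : ε ≠ 0 := hε.ne'
        have h₂ : qPoch q (q ^ b) n ≠ 0 := (hPb n).ne'
        field_simp
      rw [e1]
      refine div_le_div_of_nonneg_left (hS0 n) (mul_pos hε (hPb n)) ?_
      calc ε * qPoch q (q ^ b) n ≤ ε * 1 :=
            mul_le_mul_of_nonneg_left (qPoch_le_one hq0 hq1 hb'.1 hb'.2 n) hε.le
        _ = ε := mul_one ε
        _ ≤ qPoch q (q ^ (b - c)) n := hεle n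
    have hsv : Summable v := Summable.of_nonneg_of_le hv0 hvu (hsu.mul_left ε⁻¹)
    have hsw : Summable w := Summable.of_nonneg_of_le hw0 hwu hsu
    have hTv : 0 ≤ ∑' n, v n := tsum_nonneg hv0
    have hTw : 0 ≤ ∑' n, w n := tsum_nonneg hw0
    have key : ∑' n, u n ≤ Real.sqrt ((∑' n, v n) * (∑' n, w n)) := by
      apply Summable.tsum_le_of_sum_le hsu
      intro s
      have step1 : ∑ n ∈ s, u n ≤ ∑ n ∈ s, Real.sqrt (v n) * Real.sqrt (w n) := by
        refine Finset.sum_le_sum fun n _ => ?_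
        rw [← Real.sqrt_mul (hv0 n)]
        exact (Real.le_sqrt (hu0 n) (mul_nonneg (hv0 n) (hw0 n))).mpr (hturan n)
      have cs := Finset.sum_mul_sq_le_sq_mul_sq s (fun n => Real.sqrt (v n))
        (fun n => Real.sqrt (w n))
      have ev : ∑ n ∈ s, Real.sqrt (v n) ^ 2 = ∑ n ∈ s, v n :=
        Finset.sum_congr rfl fun n _ => Real.sq_sqrt (hv0 n)
      have ew : ∑ n ∈ s, Real.sqrt (w n) ^ 2 = ∑ n ∈ s, w n :=
        Finset.sum_congr rfl fun n _ => Real.sq_sqrt (hw0 n)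
      rw [ev, ew] at cs
      have step2 : ∑ n ∈ s, Real.sqrt (v n) * Real.sqrt (w n)
          ≤ Real.sqrt ((∑ n ∈ s, v n) * (∑ n ∈ s, w n)) :=
        (Real.le_sqrt (Finset.sum_nonneg fun n _ =>
          mul_nonneg (Real.sqrt_nonneg _) (Real.sqrt_nonneg _))
          (mul_nonneg (Finset.sum_nonneg fun n _ => hv0 n)
            (Finset.sum_nonneg fun n _ => hw0 n))).mpr cs
      have step3 : Real.sqrt ((∑ n ∈ s, v n) * (∑ n ∈ s, w n))
          ≤ Real.sqrt ((∑' n, v n) * (∑' n, w n)) :=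
        Real.sqrt_le_sqrt (mul_le_mul (Summable.sum_le_tsum s (fun n _ => hv0 n) hsv)
          (Summable.sum_le_tsum s (fun n _ => hw0 n) hsw)
          (Finset.sum_nonneg fun n _ => hw0 n) hTv)
      linarith
    calc (∑' n, u n) ^ 2 ≤ Real.sqrt ((∑' n, v n) * (∑' n, w n)) ^ 2 :=
          pow_le_pow_left₀ (tsum_nonneg hu0) key 2
      _ = (∑' n, v n) * (∑' n, w n) := Real.sq_sqrt (mul_nonneg hTv hTw)
  · rw [tsum_eq_zero_of_not_summable hsu]
    simpa using mul_nonneg (tsum_nonneg hv0) (tsum_nonneg hw0)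
end

section
/- Let (a_n)_{n≥0} and (b_n)_{n≥0} be real sequences such that the power series A(x) = Σ_{n=0}^∞ a_n x^n and B(x) = Σ_{n=0}^∞ b_n x^n converge for |x| < r, where r > 0. If b_n > 0 for all n and the sequence (a_n/b_n)_{n≥0} is increasing, then the function x ↦ A(x)/B(x) is increasing on [0,r); if moreover (a_n/b_n) is strictly increasing, then A/B is strictly increasing on [0,r). -/
set_option maxHeartbeats 4000000

/-- Absolute summability strictly inside the radius. -/
lemma aux_abs_summable (c : ℕ → ℝ) (r : ℝ) (hr : 0 < r)
    (hc : ∀ x : ℝ, |x| < r → Summable (fun n => c n * x ^ n))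
    {y : ℝ} (hy0 : 0 ≤ y) (hyr : y < r) :
    Summable (fun n => ‖c n * y ^ n‖) := by
  obtain ⟨t, hyt, htr, ht0⟩ : ∃ t : ℝ, y < t ∧ t < r ∧ 0 < t :=
    ⟨(y + r) / 2, by linarith, by linarith, by linarith⟩
  have hsum := hc t (by rwa [abs_of_pos ht0])
  have htend := hsum.tendsto_atTop_zero
  obtain ⟨C, hC⟩ := (htend.norm.bddAbove_range)
  have hC' : ∀ n, |c n| * t ^ n ≤ C := by
    intro n
    have := hC (Set.mem_range_self n)
    simpa [abs_mul, abs_pow, abs_of_pos ht0] using this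
  have hq : y / t < 1 := (div_lt_one ht0).mpr hyt
  have hq0 : 0 ≤ y / t := by positivity
  refine Summable.of_nonneg_of_le (fun n => norm_nonneg _) ?_
    ((summable_geometric_of_lt_one hq0 hq).mul_left C)
  · intro n
    have ht' : t ^ n ≠ 0 := by positivity
    have heq : |c n| * y ^ n = (|c n| * t ^ n) * (y / t) ^ n := by
      rw [div_pow]
      field_simp
    have h1 : |c n| * y ^ n ≤ C * (y / t) ^ n := by
      rw [heq]
      exact mul_le_mul_of_nonneg_right (hC' n) (by positivity)
    simpa [abs_mul, abs_pow, abs_of_nonneg hy0] using h1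


lemma aux_sym (F : ℕ × ℕ → ℝ) (hF : Summable F)
    (hnn : ∀ p : ℕ × ℕ, 0 ≤ F p + F p.swap) :
    0 ≤ ∑' p, F p ∧ ((0 < F (1, 0) + F (0, 1)) → 0 < ∑' p, F p) := by
  have hFs : Summable (fun p : ℕ × ℕ => F p.swap) := hF.prod_symm
  have hGs : Summable (fun p : ℕ × ℕ => F p + F p.swap) := hF.add hFs
  have hswap_eq : ∑' p : ℕ × ℕ, F p.swap = ∑' p, F p := by
    rw [← (Equiv.prodComm ℕ ℕ).tsum_eq F]
    rfl
  have e2 : ∑' p : ℕ × ℕ, (F p + F p.swap) = 2 * ∑' p, F p := by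
    rw [Summable.tsum_add hF hFs, hswap_eq]; ring
  constructor
  · have h : 0 ≤ ∑' p : ℕ × ℕ, (F p + F p.swap) := tsum_nonneg hnn
    rw [e2] at h; linarith
  · intro h10
    have hle : F (1, 0) + F (1, 0).swap ≤ ∑' p, (F p + F p.swap) :=
      Summable.le_tsum hGs (1, 0) (fun j _ => hnn j)
    have : (0:ℝ) < ∑' p : ℕ × ℕ, (F p + F p.swap) := by
      refine lt_of_lt_of_le ?_ hle
      simpa using h10
    rw [e2] at this; linarith

lemma aux_cross (a b : ℕ → ℝ) (r : ℝ) (hr : 0 < r)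
    (hA : ∀ x : ℝ, |x| < r → Summable (fun n => a n * x ^ n))
    (hB : ∀ x : ℝ, |x| < r → Summable (fun n => b n * x ^ n))
    (hb : ∀ n, 0 < b n)
    {x y : ℝ} (hx : 0 ≤ x) (hxy : x ≤ y) (hyr : y < r)
    (hmono : Monotone (fun n => a n / b n)) :
    (∑' n : ℕ, a n * x ^ n) * (∑' n : ℕ, b n * y ^ n) ≤
      (∑' n : ℕ, a n * y ^ n) * (∑' n : ℕ, b n * x ^ n) ∧
    (StrictMono (fun n => a n / b n) → x < y →
      (∑' n : ℕ, a n * x ^ n) * (∑' n : ℕ, b n * y ^ n) <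
        (∑' n : ℕ, a n * y ^ n) * (∑' n : ℕ, b n * x ^ n)) := by
  have hy0 : 0 ≤ y := hx.trans hxy
  have hxr : x < r := lt_of_le_of_lt hxy hyr
  have hAx := aux_abs_summable a r hr hA hx hxr
  have hAy := aux_abs_summable a r hr hA hy0 hyr
  have hBx := aux_abs_summable b r hr hB hx hxr
  have hBy := aux_abs_summable b r hr hB hy0 hyr
  -- product expansions
  have e1 : (∑' n : ℕ, a n * y ^ n) * (∑' n : ℕ, b n * x ^ n)
      = ∑' p : ℕ × ℕ, (a p.1 * y ^ p.1) * (b p.2 * x ^ p.2) :=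
    tsum_mul_tsum_of_summable_norm hAy hBx
  have e2 : (∑' n : ℕ, a n * x ^ n) * (∑' n : ℕ, b n * y ^ n)
      = ∑' p : ℕ × ℕ, (a p.1 * x ^ p.1) * (b p.2 * y ^ p.2) :=
    tsum_mul_tsum_of_summable_norm hAx hBy
  set f : ℕ × ℕ → ℝ := fun p =>
    (a p.1 * y ^ p.1) * (b p.2 * x ^ p.2) - (a p.1 * x ^ p.1) * (b p.2 * y ^ p.2) with hf
  have hs1 : Summable (fun p : ℕ × ℕ => (a p.1 * y ^ p.1) * (b p.2 * x ^ p.2)) :=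
    summable_mul_of_summable_norm hAy hBx
  have hs2 : Summable (fun p : ℕ × ℕ => (a p.1 * x ^ p.1) * (b p.2 * y ^ p.2)) :=
    summable_mul_of_summable_norm hAx hBy
  have hfs : Summable f := hs1.sub hs2
  have eD : (∑' n : ℕ, a n * y ^ n) * (∑' n : ℕ, b n * x ^ n)
      - (∑' n : ℕ, a n * x ^ n) * (∑' n : ℕ, b n * y ^ n) = ∑' p, f p := by
    rw [e1, e2, hf]
    exact (Summable.tsum_sub hs1 hs2).symm
  -- symmetrize
  have hg_eq : ∀ p : ℕ × ℕ, f p + f p.swap =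
      (a p.1 * b p.2 - a p.2 * b p.1) * (y ^ p.1 * x ^ p.2 - x ^ p.1 * y ^ p.2) := by
    intro p; simp only [hf, Prod.fst_swap, Prod.snd_swap]; ring
  have hfac1 : ∀ m n : ℕ, m ≤ n → 0 ≤ a n * b m - a m * b n := by
    intro m n hmn
    have h := hmono hmn
    have := (div_le_div_iff₀ (hb m) (hb n)).mp h
    linarith
  have hfac2 : ∀ m n : ℕ, m ≤ n → 0 ≤ y ^ n * x ^ m - x ^ n * y ^ m := by
    intro m n hmn
    obtain ⟨k, rfl⟩ := Nat.exists_eq_add_of_le hmn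
    have h1 : x ^ k ≤ y ^ k := pow_le_pow_left₀ hx hxy k
    have h2 : y ^ (m + k) * x ^ m - x ^ (m + k) * y ^ m
        = x ^ m * y ^ m * (y ^ k - x ^ k) := by
      rw [pow_add, pow_add]; ring
    rw [h2]
    have h3 : (0:ℝ) ≤ x ^ m * y ^ m := by positivity
    nlinarith
  have hg_nonneg : ∀ p : ℕ × ℕ, 0 ≤ f p + f p.swap := by
    intro ⟨n, m⟩
    rw [hg_eq]
    rcases le_total m n with h | h
    · exact mul_nonneg (hfac1 m n h) (hfac2 m n h)
    · have h1 := hfac1 n m h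
      have h2 := hfac2 n m h
      nlinarith
  obtain ⟨htg, htg'⟩ := aux_sym f hfs hg_nonneg
  have hD0 : 0 ≤ (∑' n : ℕ, a n * y ^ n) * (∑' n : ℕ, b n * x ^ n)
      - (∑' n : ℕ, a n * x ^ n) * (∑' n : ℕ, b n * y ^ n) := by
    rw [eD]; exact htg
  constructor
  · linarith
  · intro hstrict hxy'
    have h10 : 0 < f (1, 0) + f (0, 1) := by
      have e : f (1, 0) + f (0, 1) = (a 1 * b 0 - a 0 * b 1) * (y - x) := by
        simp only [hf, pow_one, pow_zero, mul_one, one_mul]; ring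
      rw [e]
      have h := (div_lt_div_iff₀ (hb 0) (hb 1)).mp (hstrict (Nat.zero_lt_one))
      have hA1 : (0:ℝ) < a 1 * b 0 - a 0 * b 1 := by linarith
      exact mul_pos hA1 (by linarith)
    have hpos := htg' h10
    have hD1 : 0 < (∑' n : ℕ, a n * y ^ n) * (∑' n : ℕ, b n * x ^ n)
        - (∑' n : ℕ, a n * x ^ n) * (∑' n : ℕ, b n * y ^ n) := by
      rw [eD]; exact hpos
    linarith

theorem statement_5 (a b : ℕ → ℝ) (r : ℝ) (hr : 0 < r)
    (hA : ∀ x : ℝ, |x| < r → Summable (fun n => a n * x ^ n))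
    (hB : ∀ x : ℝ, |x| < r → Summable (fun n => b n * x ^ n))
    (hb : ∀ n, 0 < b n) :
    (Monotone (fun n => a n / b n) →
      MonotoneOn (fun x : ℝ => (∑' n : ℕ, a n * x ^ n) / (∑' n : ℕ, b n * x ^ n))
        (Set.Ico 0 r)) ∧
    (StrictMono (fun n => a n / b n) →
      StrictMonoOn (fun x : ℝ => (∑' n : ℕ, a n * x ^ n) / (∑' n : ℕ, b n * x ^ n))
        (Set.Ico 0 r)) := by
  have hBpos : ∀ x : ℝ, x ∈ Set.Ico (0:ℝ) r → 0 < ∑' n : ℕ, b n * x ^ n := by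
    intro x ⟨hx0, hxr⟩
    have hs := hB x (by rwa [abs_of_nonneg hx0])
    refine Summable.tsum_pos hs (fun n => mul_nonneg (hb n).le (pow_nonneg hx0 n)) 0 ?_
    simpa using hb 0
  constructor
  · intro hmono x hxm y hym hxy
    have hkey := (aux_cross a b r hr hA hB hb hxm.1 hxy hym.2 hmono).1
    exact (div_le_div_iff₀ (hBpos x hxm) (hBpos y hym)).mpr hkey
  · intro hstrict x hxm y hym hxy
    have hmono := hstrict.monotone
    have hkey := (aux_cross a b r hr hA hB hb hxm.1 hxy.le hym.2 hmono).2 hstrict hxy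
    exact (div_lt_div_iff₀ (hBpos x hxm) (hBpos y hym)).mpr hkey
end

section
/- Let (a_n)_{n≥0} and (b_n)_{n≥0} be real sequences such that the power series A(x) = Σ_{n=0}^∞ a_n x^n and B(x) = Σ_{n=0}^∞ b_n x^n converge for |x| < r, where r > 0. If b_n > 0 for all n and the sequence (a_n/b_n)_{n≥0} is decreasing, then the function x ↦ A(x)/B(x) is decreasing on [0,r); if moreover (a_n/b_n) is strictly decreasing, then A/B is strictly decreasing on [0,r). -/
open Filter Topology

private lemma abs_summable_of_lt (a : ℕ → ℝ) (r : ℝ)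
    (hA : ∀ x : ℝ, |x| < r → Summable (fun n => a n * x ^ n))
    {x : ℝ} (hx : |x| < r) : Summable (fun n => ‖a n * x ^ n‖) := by
  set s : ℝ := (|x| + r) / 2 with hs
  have h1 : |x| < s := by simp only [hs]; linarith
  have hs0 : 0 < s := lt_of_le_of_lt (abs_nonneg x) h1
  have hsum := hA s (by rw [abs_of_pos hs0]; simp only [hs]; linarith)
  obtain ⟨M, hM⟩ : ∃ M, ∀ n, |a n * s ^ n| ≤ M := by
    have hb := (hsum.tendsto_atTop_zero.abs.bddAbove_range)
    obtain ⟨M, hM⟩ := hb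
    exact ⟨M, fun n => hM ⟨n, rfl⟩⟩
  set q : ℝ := |x| / s with hq
  have hq0 : 0 ≤ q := div_nonneg (abs_nonneg x) hs0.le
  have hq1 : q < 1 := (div_lt_one hs0).2 h1
  have hgeo : Summable (fun n : ℕ => M * q ^ n) :=
    (summable_geometric_of_lt_one hq0 hq1).mul_left M
  have hle : ∀ n : ℕ, ‖a n * x ^ n‖ ≤ M * q ^ n := by
    intro n
    have hsq : s * q = |x| := by rw [hq]; field_simp
    have key : ‖a n * x ^ n‖ = |a n * s ^ n| * q ^ n := by
      rw [Real.norm_eq_abs, abs_mul, abs_mul, abs_pow, abs_pow, abs_of_pos hs0,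
        ← hsq, mul_pow]
      ring
    rw [key]
    exact mul_le_mul_of_nonneg_right (hM n) (pow_nonneg hq0 n)
  exact Summable.of_nonneg_of_le (fun n => norm_nonneg _) hle hgeo

private lemma pow_cross {x y : ℝ} (hx : 0 ≤ x) (hxy : x ≤ y) {m n : ℕ} (hmn : m ≤ n) :
    x ^ n * y ^ m ≤ x ^ m * y ^ n := by
  obtain ⟨k, rfl⟩ := Nat.exists_eq_add_of_le hmn
  have hy : 0 ≤ y := hx.trans hxy
  rw [pow_add, pow_add]
  have h1 : x ^ k ≤ y ^ k := pow_le_pow_left₀ hx hxy k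
  have h2 : (0:ℝ) ≤ x ^ m := pow_nonneg hx m
  have h3 : (0:ℝ) ≤ y ^ m := pow_nonneg hy m
  calc x ^ m * x ^ k * y ^ m ≤ x ^ m * y ^ k * y ^ m := by
        exact mul_le_mul_of_nonneg_right (mul_le_mul_of_nonneg_left h1 h2) h3
    _ = x ^ m * (y ^ m * y ^ k) := by ring

theorem statement_6 (a b : ℕ → ℝ) (r : ℝ) (hr : 0 < r)
    (hA : ∀ x : ℝ, |x| < r → Summable (fun n => a n * x ^ n))
    (hB : ∀ x : ℝ, |x| < r → Summable (fun n => b n * x ^ n))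
    (hb : ∀ n, 0 < b n) :
    (Antitone (fun n => a n / b n) →
      AntitoneOn (fun x : ℝ => (∑' n : ℕ, a n * x ^ n) / (∑' n : ℕ, b n * x ^ n))
        (Set.Ico 0 r)) ∧
    (StrictAnti (fun n => a n / b n) →
      StrictAntiOn (fun x : ℝ => (∑' n : ℕ, a n * x ^ n) / (∑' n : ℕ, b n * x ^ n))
        (Set.Ico 0 r)) := by
  -- basic facts
  have habs : ∀ x ∈ Set.Ico (0:ℝ) r, |x| < r := fun x hx => by
    rw [abs_of_nonneg hx.1]; exact hx.2
  have hBpos : ∀ x ∈ Set.Ico (0:ℝ) r, 0 < ∑' n : ℕ, b n * x ^ n := by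
    intro x hx
    refine Summable.tsum_pos (hB x (habs x hx)) (fun n => mul_nonneg (hb n).le (pow_nonneg hx.1 n)) 0 ?_
    simpa using hb 0
  -- key computation: for x ≤ y in Ico 0 r,
  -- A x * B y - A y * B x = (1/2) * ∑' p, G p  where G p ≥ 0 pointwise (given hab)
  have key : ∀ x ∈ Set.Ico (0:ℝ) r, ∀ y ∈ Set.Ico (0:ℝ) r,
      Summable (fun p : ℕ × ℕ =>
        (a p.1 * b p.2 - a p.2 * b p.1) * (x ^ p.1 * y ^ p.2 - x ^ p.2 * y ^ p.1)) ∧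
      (∑' n : ℕ, a n * x ^ n) * (∑' n : ℕ, b n * y ^ n)
        - (∑' n : ℕ, a n * y ^ n) * (∑' n : ℕ, b n * x ^ n)
      = (1/2) * ∑' p : ℕ × ℕ,
        (a p.1 * b p.2 - a p.2 * b p.1) * (x ^ p.1 * y ^ p.2 - x ^ p.2 * y ^ p.1) := by
    intro x hx y hy
    have hax := abs_summable_of_lt a r hA (habs x hx)
    have hay := abs_summable_of_lt a r hA (habs y hy)
    have hbx := abs_summable_of_lt b r hB (habs x hx)
    have hby := abs_summable_of_lt b r hB (habs y hy)
    -- products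
    have S1 : Summable (fun p : ℕ × ℕ => (a p.1 * x ^ p.1) * (b p.2 * y ^ p.2)) :=
      summable_mul_of_summable_norm (R := ℝ) (f := fun n => a n * x ^ n)
        (g := fun n => b n * y ^ n) hax hby
    have S2 : Summable (fun p : ℕ × ℕ => (a p.1 * y ^ p.1) * (b p.2 * x ^ p.2)) :=
      summable_mul_of_summable_norm (R := ℝ) (f := fun n => a n * y ^ n)
        (g := fun n => b n * x ^ n) hay hbx
    have S1s : Summable (fun p : ℕ × ℕ => (a p.2 * x ^ p.2) * (b p.1 * y ^ p.1)) :=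
      ((Equiv.prodComm ℕ ℕ).summable_iff
        (f := fun p : ℕ × ℕ => (a p.1 * x ^ p.1) * (b p.2 * y ^ p.2))).2 S1
    have S2s : Summable (fun p : ℕ × ℕ => (a p.2 * y ^ p.2) * (b p.1 * x ^ p.1)) :=
      ((Equiv.prodComm ℕ ℕ).summable_iff
        (f := fun p : ℕ × ℕ => (a p.1 * y ^ p.1) * (b p.2 * x ^ p.2))).2 S2
    have hGeq : (fun p : ℕ × ℕ =>
        (a p.1 * b p.2 - a p.2 * b p.1) * (x ^ p.1 * y ^ p.2 - x ^ p.2 * y ^ p.1))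
      = fun p : ℕ × ℕ => ((a p.1 * x ^ p.1) * (b p.2 * y ^ p.2)
          - (a p.1 * y ^ p.1) * (b p.2 * x ^ p.2))
        + ((a p.2 * x ^ p.2) * (b p.1 * y ^ p.1)
          - (a p.2 * y ^ p.2) * (b p.1 * x ^ p.1)) := by
      funext p; ring
    have SG : Summable (fun p : ℕ × ℕ =>
        (a p.1 * b p.2 - a p.2 * b p.1) * (x ^ p.1 * y ^ p.2 - x ^ p.2 * y ^ p.1)) := by
      rw [hGeq]; exact (S1.sub S2).add (S1s.sub S2s)
    refine ⟨SG, ?_⟩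
    have T1 : (∑' n : ℕ, a n * x ^ n) * (∑' n : ℕ, b n * y ^ n)
        = ∑' p : ℕ × ℕ, (a p.1 * x ^ p.1) * (b p.2 * y ^ p.2) :=
      tsum_mul_tsum_of_summable_norm (R := ℝ) (f := fun n => a n * x ^ n)
        (g := fun n => b n * y ^ n) hax hby
    have T2 : (∑' n : ℕ, a n * y ^ n) * (∑' n : ℕ, b n * x ^ n)
        = ∑' p : ℕ × ℕ, (a p.1 * y ^ p.1) * (b p.2 * x ^ p.2) :=
      tsum_mul_tsum_of_summable_norm (R := ℝ) (f := fun n => a n * y ^ n)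
        (g := fun n => b n * x ^ n) hay hbx
    have T1s : (∑' p : ℕ × ℕ, (a p.2 * x ^ p.2) * (b p.1 * y ^ p.1))
        = ∑' p : ℕ × ℕ, (a p.1 * x ^ p.1) * (b p.2 * y ^ p.2) :=
      (Equiv.prodComm ℕ ℕ).tsum_eq
        (fun p : ℕ × ℕ => (a p.1 * x ^ p.1) * (b p.2 * y ^ p.2))
    have T2s : (∑' p : ℕ × ℕ, (a p.2 * y ^ p.2) * (b p.1 * x ^ p.1))
        = ∑' p : ℕ × ℕ, (a p.1 * y ^ p.1) * (b p.2 * x ^ p.2) :=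
      (Equiv.prodComm ℕ ℕ).tsum_eq
        (fun p : ℕ × ℕ => (a p.1 * y ^ p.1) * (b p.2 * x ^ p.2))
    rw [hGeq, Summable.tsum_add (S1.sub S2) (S1s.sub S2s), Summable.tsum_sub S1 S2, Summable.tsum_sub S1s S2s,
      T1s, T2s, ← T1, ← T2]
    ring
  -- pointwise nonnegativity
  have hGnn : ∀ (x y : ℝ), 0 ≤ x → x ≤ y →
      (∀ m n : ℕ, m ≤ n → a n * b m ≤ a m * b n) →
      ∀ p : ℕ × ℕ, 0 ≤ (a p.1 * b p.2 - a p.2 * b p.1) *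
        (x ^ p.1 * y ^ p.2 - x ^ p.2 * y ^ p.1) := by
    intro x y hx hxy hab p
    obtain ⟨m, n⟩ := p
    rcases le_total m n with h | h
    · exact mul_nonneg (sub_nonneg.2 (hab m n h)) (sub_nonneg.2 (pow_cross hx hxy h))
    · have h1 := sub_nonpos.2 (hab n m h)
      have h2 := sub_nonpos.2 (pow_cross hx hxy h)
      nlinarith [h1, h2]
  constructor
  · -- antitone case
    intro hanti x hx y hy hxy
    have hab : ∀ m n : ℕ, m ≤ n → a n * b m ≤ a m * b n := fun m n h =>
      (div_le_div_iff₀ (hb n) (hb m)).1 (hanti h)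
    obtain ⟨SG, hkey⟩ := key x hx y hy
    have hnn : 0 ≤ ∑' p : ℕ × ℕ,
        (a p.1 * b p.2 - a p.2 * b p.1) * (x ^ p.1 * y ^ p.2 - x ^ p.2 * y ^ p.1) :=
      tsum_nonneg (hGnn x y hx.1 hxy hab)
    have hD : (∑' n : ℕ, a n * y ^ n) * (∑' n : ℕ, b n * x ^ n)
        ≤ (∑' n : ℕ, a n * x ^ n) * (∑' n : ℕ, b n * y ^ n) := by nlinarith [hkey]
    exact (div_le_div_iff₀ (hBpos y hy) (hBpos x hx)).2 hD
  · -- strict case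
    intro hanti x hx y hy hxy
    have hab : ∀ m n : ℕ, m ≤ n → a n * b m ≤ a m * b n := fun m n h =>
      (div_le_div_iff₀ (hb n) (hb m)).1 (hanti.antitone h)
    obtain ⟨SG, hkey⟩ := key x hx y hy
    have hpos : 0 < ∑' p : ℕ × ℕ,
        (a p.1 * b p.2 - a p.2 * b p.1) * (x ^ p.1 * y ^ p.2 - x ^ p.2 * y ^ p.1) := by
      refine Summable.tsum_pos SG (hGnn x y hx.1 hxy.le hab) (0, 1) ?_
      have h01 : a 1 * b 0 < a 0 * b 1 :=
        (div_lt_div_iff₀ (hb 1) (hb 0)).1 (hanti (by norm_num : (0:ℕ) < 1))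
      have : x ^ (0:ℕ) * y ^ (1:ℕ) - x ^ (1:ℕ) * y ^ (0:ℕ) = y - x := by ring
      simp only [this]
      exact mul_pos (sub_pos.2 h01) (sub_pos.2 hxy)
    have hD : (∑' n : ℕ, a n * y ^ n) * (∑' n : ℕ, b n * x ^ n)
        < (∑' n : ℕ, a n * x ^ n) * (∑' n : ℕ, b n * y ^ n) := by nlinarith [hkey]
    exact (div_lt_div_iff₀ (hBpos y hy) (hBpos x hx)).2 hD
end

section
/- Let 0<q<1 and let b,c be real numbers with b>c>0. Fix n ∈ ℕ. Then the finite sequence k ↦ A_{n,k} = (q^b;q)_k (q^b;q)_{n-k} / ((q^{b-c};q)_k (q^{b+c};q)_{n-k}) is increasing for 0 ≤ k ≤ n; equivalently, for 0 ≤ k ≤ n-1 one has A_{n,k+1}/A_{n,k} = [(1-q^{b+k})/(1-q^{b-c+k})]·[(1-q^{b+c+n-k-1})/(1-q^{b+n-k-1})] ≥ 1. -/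
/-- `A_{n,k} = (q^b;q)_k (q^b;q)_{n-k} / ((q^{b-c};q)_k (q^{b+c};q)_{n-k})`. -/
noncomputable def A (q b c : ℝ) (n k : ℕ) : ℝ :=
  qPoch q (q ^ b) k * qPoch q (q ^ b) (n - k) /
    (qPoch q (q ^ (b - c)) k * qPoch q (q ^ (b + c)) (n - k))

lemma fac_pos {q : ℝ} (hq0 : 0 < q) (hq1 : q < 1) {e : ℝ} (he : 0 < e) (j : ℕ) :
    0 < 1 - q ^ e * q ^ j := by
  have h : q ^ e * q ^ j = q ^ (e + (j : ℝ)) := by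
    rw [← Real.rpow_natCast q j, ← Real.rpow_add hq0]
  rw [h]
  have : q ^ (e + (j : ℝ)) < 1 := Real.rpow_lt_one hq0.le hq1 (by positivity)
  linarith

lemma qPoch_pos_s7 {q : ℝ} (hq0 : 0 < q) (hq1 : q < 1) {e : ℝ} (he : 0 < e) (j : ℕ) :
    0 < qPoch q (q ^ e) j :=
  Finset.prod_pos fun i _ => fac_pos hq0 hq1 he i

theorem statement_7 (q b c : ℝ) (hq0 : 0 < q) (hq1 : q < 1)
    (hbc : b > c) (hc : 0 < c) (n : ℕ) :
    ∀ k : ℕ, k + 1 ≤ n →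
      A q b c n k ≤ A q b c n (k + 1) ∧
      A q b c n (k + 1) / A q b c n k =
        ((1 - q ^ (b + k)) / (1 - q ^ (b - c + k))) *
          ((1 - q ^ (b + c + n - k - 1)) / (1 - q ^ (b + n - k - 1))) ∧
      1 ≤ A q b c n (k + 1) / A q b c n k := by
  intro k hk
  have hb : 0 < b := hc.trans hbc
  have hb1 : 0 < b - c := sub_pos.mpr hbc
  have hb2 : 0 < b + c := by linarith
  set m := n - (k + 1) with hm
  have hnk : n - k = m + 1 := by omega
  have hmm : n - (k + 1) = m := rfl
  have hmr : (m : ℝ) = (n : ℝ) - k - 1 := by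
    rw [hm, Nat.cast_sub hk]; push_cast; ring
  have p1 : 0 < qPoch q (q ^ b) k := qPoch_pos_s7 hq0 hq1 hb k
  have p2 : 0 < qPoch q (q ^ b) m := qPoch_pos_s7 hq0 hq1 hb m
  have p3 : 0 < qPoch q (q ^ (b - c)) k := qPoch_pos_s7 hq0 hq1 hb1 k
  have p4 : 0 < qPoch q (q ^ (b + c)) m := qPoch_pos_s7 hq0 hq1 hb2 m
  have f1 : 0 < 1 - q ^ b * q ^ k := fac_pos hq0 hq1 hb k
  have f2 : 0 < 1 - q ^ (b - c) * q ^ k := fac_pos hq0 hq1 hb1 k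
  have f3 : 0 < 1 - q ^ (b + c) * q ^ m := fac_pos hq0 hq1 hb2 m
  have f4 : 0 < 1 - q ^ b * q ^ m := fac_pos hq0 hq1 hb m
  have hAk : A q b c n k =
      qPoch q (q ^ b) k * (qPoch q (q ^ b) m * (1 - q ^ b * q ^ m)) /
        (qPoch q (q ^ (b - c)) k * (qPoch q (q ^ (b + c)) m * (1 - q ^ (b + c) * q ^ m))) := by
    simp only [A, hnk, qPoch, Finset.prod_range_succ]
  have hAk1 : A q b c n (k + 1) =
      (qPoch q (q ^ b) k * (1 - q ^ b * q ^ k)) * qPoch q (q ^ b) m /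
        ((qPoch q (q ^ (b - c)) k * (1 - q ^ (b - c) * q ^ k)) * qPoch q (q ^ (b + c)) m) := by
    simp only [A, hmm, qPoch, Finset.prod_range_succ]
  have hratio : A q b c n (k + 1) / A q b c n k =
      ((1 - q ^ b * q ^ k) / (1 - q ^ (b - c) * q ^ k)) *
        ((1 - q ^ (b + c) * q ^ m) / (1 - q ^ b * q ^ m)) := by
    rw [hAk, hAk1]
    field_simp
  have hc1 : q ^ b * q ^ k = q ^ (b + (k : ℝ)) := by
    rw [← Real.rpow_natCast q k, ← Real.rpow_add hq0]
  have hc2 : q ^ (b - c) * q ^ k = q ^ (b - c + (k : ℝ)) := by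
    rw [← Real.rpow_natCast q k, ← Real.rpow_add hq0]
  have hc3 : q ^ (b + c) * q ^ m = q ^ (b + c + (n : ℝ) - k - 1) := by
    rw [← Real.rpow_natCast q m, ← Real.rpow_add hq0]
    congr 1; rw [hmr]; ring
  have hc4 : q ^ b * q ^ m = q ^ (b + (n : ℝ) - k - 1) := by
    rw [← Real.rpow_natCast q m, ← Real.rpow_add hq0]
    congr 1; rw [hmr]; ring
  have g1 : 1 ≤ (1 - q ^ b * q ^ k) / (1 - q ^ (b - c) * q ^ k) := by
    rw [le_div_iff₀ f2]
    have : q ^ b ≤ q ^ (b - c) :=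
      Real.rpow_le_rpow_of_exponent_ge hq0 hq1.le (by linarith)
    have : q ^ b * q ^ k ≤ q ^ (b - c) * q ^ k :=
      mul_le_mul_of_nonneg_right this (by positivity)
    linarith
  have g2 : 1 ≤ (1 - q ^ (b + c) * q ^ m) / (1 - q ^ b * q ^ m) := by
    rw [le_div_iff₀ f4]
    have : q ^ (b + c) ≤ q ^ b :=
      Real.rpow_le_rpow_of_exponent_ge hq0 hq1.le (by linarith)
    have : q ^ (b + c) * q ^ m ≤ q ^ b * q ^ m :=
      mul_le_mul_of_nonneg_right this (by positivity)
    linarith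
  have hge1 : 1 ≤ A q b c n (k + 1) / A q b c n k := by
    rw [hratio]; nlinarith
  have hApos : 0 < A q b c n k := by
    rw [hAk]; positivity
  refine ⟨(one_le_div hApos).mp hge1, ?_, hge1⟩
  rw [hratio, hc1, hc2, hc3, hc4]
end

section
/- Let r ≥ 1, 0<q<1, and let b = (b_1,…,b_r), c = (c_1,…,c_r) be real parameters with b_j > c_j > 0 for j = 1,…,r. Fix n ∈ ℕ. Then the finite sequence k ↦ W_{n,k} = ∏_{j=1}^r (q^{b_j};q)_k (q^{b_j};q)_{n-k} / ((q^{b_j-c_j};q)_k (q^{b_j+c_j};q)_{n-k}) is increasing for 0 ≤ k ≤ n; equivalently, for 0 ≤ k ≤ n-1 one has W_{n,k+1}/W_{n,k} = ∏_{j=1}^r [(1-q^{b_j+k})/(1-q^{b_j-c_j+k})]·[(1-q^{b_j+c_j+n-k-1})/(1-q^{b_j+n-k-1})] ≥ 1. -/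
/-- `W_{n,k} = ∏_{j=1}^r (q^{b_j};q)_k (q^{b_j};q)_{n-k}
      / ((q^{b_j-c_j};q)_k (q^{b_j+c_j};q)_{n-k})`. -/
noncomputable def W (q : ℝ) (r : ℕ) (b c : Fin r → ℝ) (n k : ℕ) : ℝ :=
  ∏ j, qPoch q (q ^ b j) k * qPoch q (q ^ b j) (n - k) /
    (qPoch q (q ^ (b j - c j)) k * qPoch q (q ^ (b j + c j)) (n - k))

lemma qPoch_pos_s9 {q x : ℝ} (hq0 : 0 < q) (hq1 : q < 1) (hx0 : 0 < x) (hx1 : x < 1)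
    (m : ℕ) : 0 < qPoch q x m := by
  unfold qPoch
  apply Finset.prod_pos
  intro i _
  have h1 : q ^ i ≤ 1 := pow_le_one₀ hq0.le hq1.le
  have h2 : 0 < q ^ i := pow_pos hq0 i
  nlinarith

lemma qPoch_succ (q x : ℝ) (m : ℕ) :
    qPoch q x (m + 1) = qPoch q x m * (1 - x * q ^ m) := by
  unfold qPoch
  exact Finset.prod_range_succ _ _

theorem statement_9 (r : ℕ) (hr : 1 ≤ r) (q : ℝ) (hq0 : 0 < q) (hq1 : q < 1)
    (b c : Fin r → ℝ) (hbc : ∀ j, b j > c j) (hc : ∀ j, 0 < c j) (n : ℕ) :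
    ∀ k : ℕ, k + 1 ≤ n →
      W q r b c n k ≤ W q r b c n (k + 1) ∧
      W q r b c n (k + 1) / W q r b c n k =
        ∏ j, ((1 - q ^ (b j + k)) / (1 - q ^ (b j - c j + k))) *
          ((1 - q ^ (b j + c j + n - k - 1)) / (1 - q ^ (b j + n - k - 1))) ∧
      1 ≤ W q r b c n (k + 1) / W q r b c n k := by
  intro k hk
  set m : ℕ := n - (k + 1) with hm
  have hnk : n - k = m + 1 := by omega
  have hmc : (m : ℝ) = (n : ℝ) - k - 1 := by
    have := Nat.cast_sub (R := ℝ) hk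
    push_cast [hm] at this ⊢
    linarith
  -- basics about rpow
  have hrpos : ∀ e : ℝ, 0 < q ^ e := fun e => Real.rpow_pos_of_pos hq0 e
  have hrlt1 : ∀ e : ℝ, 0 < e → q ^ e < 1 := fun e he => Real.rpow_lt_one hq0.le hq1 he
  have hb0 : ∀ j, 0 < b j := fun j => lt_trans (hc j) (hbc j)
  have hbc0 : ∀ j, 0 < b j - c j := fun j => sub_pos.mpr (hbc j)
  have hbcp0 : ∀ j, 0 < b j + c j := fun j => add_pos (hb0 j) (hc j)
  -- positivity of W
  have hWpos : ∀ l : ℕ, 0 < W q r b c n l := by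
    intro l
    unfold W
    apply Finset.prod_pos
    intro j _
    apply div_pos
    · exact mul_pos (qPoch_pos_s9 hq0 hq1 (hrpos _) (hrlt1 _ (hb0 j)) _)
        (qPoch_pos_s9 hq0 hq1 (hrpos _) (hrlt1 _ (hb0 j)) _)
    · exact mul_pos (qPoch_pos_s9 hq0 hq1 (hrpos _) (hrlt1 _ (hbc0 j)) _)
        (qPoch_pos_s9 hq0 hq1 (hrpos _) (hrlt1 _ (hbcp0 j)) _)
  -- exponent rewrites
  have e1 : ∀ a : ℝ, q ^ (a + (k : ℝ)) = q ^ a * q ^ k := by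
    intro a
    rw [Real.rpow_add hq0, Real.rpow_natCast]
  have e2 : ∀ a : ℝ, q ^ (a + (n : ℝ) - k - 1) = q ^ a * q ^ m := by
    intro a
    have : a + (n : ℝ) - k - 1 = a + (m : ℝ) := by rw [hmc]; ring
    rw [this, Real.rpow_add hq0, Real.rpow_natCast]
  -- ratio factors
  set R : Fin r → ℝ := fun j =>
    ((1 - q ^ (b j + (k : ℝ))) / (1 - q ^ (b j - c j + (k : ℝ)))) *
      ((1 - q ^ (b j + c j + (n : ℝ) - k - 1)) / (1 - q ^ (b j + (n : ℝ) - k - 1))) with hR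
  -- term positivity facts
  have hterm : ∀ (a : ℝ) (i : ℕ), 0 < a → 0 < 1 - q ^ a * q ^ i := by
    intro a i ha
    have h1 : q ^ a < 1 := hrlt1 a ha
    have h2 : q ^ i ≤ 1 := pow_le_one₀ hq0.le hq1.le
    have h3 : 0 < q ^ i := pow_pos hq0 i
    have h4 : 0 < q ^ a := hrpos a
    nlinarith
  -- per-j step
  have hstepj : ∀ j : Fin r,
      qPoch q (q ^ b j) (k + 1) * qPoch q (q ^ b j) (n - (k + 1)) /
        (qPoch q (q ^ (b j - c j)) (k + 1) * qPoch q (q ^ (b j + c j)) (n - (k + 1))) =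
      (qPoch q (q ^ b j) k * qPoch q (q ^ b j) (n - k) /
        (qPoch q (q ^ (b j - c j)) k * qPoch q (q ^ (b j + c j)) (n - k))) * R j := by
    intro j
    have hy := qPoch_pos_s9 hq0 hq1 (hrpos (b j - c j)) (hrlt1 _ (hbc0 j)) k
    have hz := qPoch_pos_s9 hq0 hq1 (hrpos (b j + c j)) (hrlt1 _ (hbcp0 j)) m
    have hv := hterm (b j - c j) k (hbc0 j)
    have hw := hterm (b j) m (hb0 j)
    have hs := hterm (b j + c j) m (hbcp0 j)
    rw [hR]
    simp only [e1, e2, hnk, ← hm, qPoch_succ]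
    field_simp
  -- step for W
  have hstep : W q r b c n (k + 1) = W q r b c n k * ∏ j, R j := by
    unfold W
    rw [← Finset.prod_mul_distrib]
    exact Finset.prod_congr rfl fun j _ => hstepj j
  have hWk := hWpos k
  have hratio : W q r b c n (k + 1) / W q r b c n k = ∏ j, R j := by
    rw [hstep, mul_comm, mul_div_assoc, div_self hWk.ne', mul_one]
  have hRge1 : ∀ j : Fin r, 1 ≤ R j := by
    intro j
    have h1 : 0 < 1 - q ^ (b j - c j + (k : ℝ)) := by
      have hk0 : (0:ℝ) ≤ (k:ℝ) := Nat.cast_nonneg k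
      have := hrlt1 (b j - c j + k) (by have := hbc0 j; linarith)
      linarith
    have h2 : q ^ (b j + (k : ℝ)) ≤ q ^ (b j - c j + (k : ℝ)) := by
      apply Real.rpow_le_rpow_of_exponent_ge hq0 hq1.le
      have := hc j; linarith
    have h3 : 0 < 1 - q ^ (b j + (n : ℝ) - k - 1) := by
      have := hrlt1 (b j + n - k - 1) (by
        have : (k : ℝ) + 1 ≤ n := by exact_mod_cast hk
        have := hb0 j; linarith)
      linarith
    have h4 : q ^ (b j + c j + (n : ℝ) - k - 1) ≤ q ^ (b j + (n : ℝ) - k - 1) := by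
      apply Real.rpow_le_rpow_of_exponent_ge hq0 hq1.le
      have := hc j; linarith
    have f1 : 1 ≤ (1 - q ^ (b j + (k : ℝ))) / (1 - q ^ (b j - c j + (k : ℝ))) := by
      rw [le_div_iff₀ h1]; linarith
    have f2 : 1 ≤ (1 - q ^ (b j + c j + (n : ℝ) - k - 1)) / (1 - q ^ (b j + (n : ℝ) - k - 1)) := by
      rw [le_div_iff₀ h3]; linarith
    calc 1 = 1 * 1 := by ring
    _ ≤ _ := mul_le_mul f1 f2 zero_le_one (le_trans zero_le_one f1)
  have hProdge1 : 1 ≤ ∏ j, R j := by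
    have h := Finset.prod_le_prod (s := Finset.univ) (f := fun _ : Fin r => (1:ℝ)) (g := R)
      (fun j _ => zero_le_one) (fun j _ => hRge1 j)
    simpa using h
  refine ⟨?_, ?_, ?_⟩
  · calc W q r b c n k = W q r b c n k * 1 := by ring
    _ ≤ W q r b c n k * ∏ j, R j := by
        exact mul_le_mul_of_nonneg_left hProdge1 hWk.le
    _ = W q r b c n (k + 1) := hstep.symm
  · exact hratio
  · rw [hratio]; exact hProdge1
end

section
/- For every n ∈ ℕ, n ≥ 1, and every x > 0, the two-sided inequality (n+1)/(n+2) ≤ R_{n-1}(x) R_{n+1}(x) / [R_n(x)]² < 1 holds, and both constants are best possible: the lower bound is the limit as x → 0⁺ and the upper bound is the limit as x → ∞. -/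
open Real Filter Set Finset


open Real Filter Set Finset

noncomputable def Q (k : ℕ) (x : ℝ) : ℝ :=
  Real.exp x - ∑ i ∈ Finset.range k, x ^ i / i.factorial

lemma Q_succ (k : ℕ) (x : ℝ) : Q k x = Q (k + 1) x + x ^ k / k.factorial := by
  simp [Q, Finset.sum_range_succ]; ring

lemma Q_zero (k : ℕ) : Q k 0 = if k = 0 then 1 else 0 := by
  rcases k with _ | k
  · simp [Q]
  · simp only [Q, Finset.sum_range_succ', Real.exp_zero]
    rw [Finset.sum_eq_zero (fun i _ => by simp)]
    simp

lemma Q_ge (k : ℕ) {x : ℝ} (hx : 0 ≤ x) : x ^ k / k.factorial ≤ Q k x := by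
  have h := Real.sum_le_exp_of_nonneg hx (k + 1)
  rw [Finset.sum_range_succ] at h
  simp only [Q]
  linarith

lemma Q_pos (k : ℕ) {x : ℝ} (hx : 0 < x) : 0 < Q k x :=
  lt_of_lt_of_le (by positivity) (Q_ge k hx.le)

lemma Q_hasDerivAt (k : ℕ) (x : ℝ) : HasDerivAt (Q k) (Q (k - 1) x) x := by
  have hsum : HasDerivAt (fun y : ℝ => ∑ i ∈ Finset.range k, y ^ i / i.factorial)
      (∑ i ∈ Finset.range (k - 1), x ^ i / i.factorial) x := by
    have h1 : HasDerivAt (fun y : ℝ => ∑ i ∈ Finset.range k, y ^ i / i.factorial)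
        (∑ i ∈ Finset.range k, (i : ℝ) * x ^ (i - 1) / i.factorial) x := by
      apply HasDerivAt.fun_sum
      intro i _
      exact (hasDerivAt_pow i x).div_const _
    convert h1 using 1
    rcases k with _ | k
    · simp
    · rw [Finset.sum_range_succ']
      simp only [Nat.add_sub_cancel]
      simp only [Nat.cast_zero, zero_mul, zero_div, add_zero]
      apply Finset.sum_congr rfl
      intro i _
      rw [Nat.factorial_succ]
      push_cast
      rw [mul_div_mul_left _ _ (by positivity : (i:ℝ) + 1 ≠ 0)]
  exact ((Real.hasDerivAt_exp x).sub hsum)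

lemma pos_of_deriv_pos {f g : ℝ → ℝ} (hf0 : f 0 = 0)
    (hd : ∀ x : ℝ, HasDerivAt f (g x) x) (hg : ∀ x : ℝ, 0 < x → 0 < g x) :
    ∀ x : ℝ, 0 < x → 0 < f x := by
  have mono : StrictMonoOn f (Set.Ici 0) := by
    apply strictMonoOn_of_deriv_pos (convex_Ici 0)
      (fun x _ => (hd x).continuousAt.continuousWithinAt)
    intro x hx
    rw [interior_Ici] at hx
    rw [(hd x).deriv]
    exact hg x hx
  intro x hx
  have := mono (Set.self_mem_Ici) (Set.mem_Ici.2 hx.le) hx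
  rwa [hf0] at this

lemma pos_of_tendsto {h g : ℝ → ℝ}
    (hlim : Filter.Tendsto h (nhdsWithin 0 (Set.Ioi 0)) (nhds 0))
    (hd : ∀ x : ℝ, 0 < x → HasDerivAt h (g x) x) (hg : ∀ x : ℝ, 0 < x → 0 < g x) :
    ∀ x : ℝ, 0 < x → 0 < h x := by
  have mono : StrictMonoOn h (Set.Ioi 0) := by
    apply strictMonoOn_of_deriv_pos (convex_Ioi 0)
      (fun x hx => ((hd x hx).continuousAt.continuousWithinAt))
    intro x hx
    rw [interior_Ioi] at hx
    rw [(hd x hx).deriv]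
    exact hg x hx
  have nonneg : ∀ x : ℝ, 0 < x → 0 ≤ h x := by
    intro x hx
    refine le_of_tendsto hlim ?_
    filter_upwards [Ioo_mem_nhdsGT_of_mem (Set.mem_Ico.2 ⟨le_refl (0:ℝ), hx⟩)] with y hy
    exact (mono (Set.mem_Ioi.2 hy.1) (Set.mem_Ioi.2 hx) hy.2).le
  intro x hx
  have h1 : h (x / 2) < h x := mono (Set.mem_Ioi.2 (by positivity)) (Set.mem_Ioi.2 hx) (by linarith)
  have h2 : 0 ≤ h (x / 2) := nonneg _ (by positivity)
  linarith

/-- `x * Q j x > (j+1) * Q (j+1) x` for `x > 0`. -/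
lemma Q_ratio (j : ℕ) : ∀ x : ℝ, 0 < x → ((j : ℝ) + 1) * Q (j + 1) x < x * Q j x := by
  induction j with
  | zero =>
    intro x hx
    have := pos_of_deriv_pos (f := fun x => x * Q 0 x - 1 * Q 1 x)
      (g := fun x => x * Q 0 x) (by simp [Q_zero]) (fun x => by
        have h1 := ((hasDerivAt_id x).mul (Q_hasDerivAt 0 x)).sub
          ((Q_hasDerivAt 1 x).const_mul 1)
        refine h1.congr_deriv ?_
        simp) (fun x hx => mul_pos hx (Q_pos 0 hx)) x hx
    norm_num
    linarith
  | succ j ih =>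
    intro x hx
    have key := pos_of_deriv_pos
      (f := fun x => x * Q (j+1) x - ((j:ℝ) + 2) * Q (j + 2) x)
      (g := fun x => x * Q j x - ((j:ℝ) + 1) * Q (j+1) x)
      (by simp [Q_zero]) (fun x => by
        have h1 := ((hasDerivAt_id x).mul (Q_hasDerivAt (j+1) x)).sub
          ((Q_hasDerivAt (j+2) x).const_mul ((j:ℝ)+2))
        refine h1.congr_deriv ?_
        simp
        ring) (fun x hx => by
          have := ih x hx; linarith) x hx
    have key2 : 0 < x * Q (j+1) x - ((j:ℝ)+2) * Q (j+1+1) x := key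
    push_cast
    linarith

lemma Q_le (k : ℕ) : ∀ x : ℝ, 0 < x → Q k x ≤ x ^ k / k.factorial * Real.exp x := by
  induction k with
  | zero => intro x hx; simp [Q]
  | succ k ih =>
    intro x hx
    have key := pos_of_deriv_pos
      (f := fun x => x ^ (k+1) / (k+1).factorial * Real.exp x - Q (k+1) x)
      (g := fun x => (x ^ k / k.factorial * Real.exp x - Q k x)
          + x ^ (k+1) / (k+1).factorial * Real.exp x)
      (by simp [Q_zero])
      (fun x => by
        have h1 := (((hasDerivAt_pow (k+1) x).div_const ((k+1).factorial : ℝ)).mul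
          (Real.hasDerivAt_exp x)).sub (Q_hasDerivAt (k+1) x)
        refine h1.congr_deriv ?_
        simp only [Nat.add_sub_cancel]
        rw [Nat.factorial_succ]
        push_cast
        have : ((k:ℝ) + 1) ≠ 0 := by positivity
        field_simp
        ring)
      (fun x hx => by
        have h2 := ih x hx
        have h3 : 0 < x ^ (k+1) / (k+1).factorial * Real.exp x := by positivity
        linarith) x hx
    linarith

lemma Q_cont (k : ℕ) : Continuous (Q k) := by
  apply Continuous.sub Real.continuous_exp
  exact continuous_finset_sum _ (fun i _ => (continuous_pow i).div_const _)

lemma turan : ∀ m : ℕ, ∀ x : ℝ, 0 < x →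
    (m : ℝ) * Q m x ^ 2 < ((m : ℝ) + 1) * (Q (m - 1) x * Q (m + 1) x) := by
  intro m
  induction m with
  | zero =>
    intro x hx
    have h0 := Q_pos 0 hx
    have h1 := Q_pos 1 hx
    push_cast
    nlinarith
  | succ m ih =>
    -- goal: (m+1) * Q (m+1) x ^ 2 < (m+2) * (Q m x * Q (m+2) x)
    set p : ℝ := (m : ℝ) / ((m : ℝ) + 1) with hp
    have hm1 : ((m : ℝ) + 1) ≠ 0 := by positivity
    have hpm : ((m : ℝ) + 1) * p = m := by rw [hp]; field_simp
    have hp0 : 0 ≤ p := by positivity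
    set L : ℝ → ℝ := fun x => ((m : ℝ) + 2) * (Q m x * Q (m + 2) x)
      - ((m : ℝ) + 1) * Q (m + 1) x ^ 2 with hL
    set N : ℝ → ℝ := fun x => ((m : ℝ) + 2) * (Q (m - 1) x * Q (m + 2) x
      + Q m x * Q (m + 1) x) - 2 * ((m : ℝ) + 1) * (Q m x * Q (m + 1) x) with hN
    have hLd : ∀ x : ℝ, HasDerivAt L (N x) x := by
      intro x
      have h1 := (((Q_hasDerivAt m x).mul (Q_hasDerivAt (m + 2) x)).const_mul
        ((m : ℝ) + 2)).sub (((Q_hasDerivAt (m + 1) x).pow 2).const_mul ((m : ℝ) + 1))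
      refine h1.congr_deriv ?_
      simp only [hN, Nat.add_sub_cancel]
      push_cast
      ring
    set h : ℝ → ℝ := fun x => L x * Q (m + 1) x ^ (-p) with hh
    have hhd : ∀ x : ℝ, 0 < x → HasDerivAt h
        (N x * Q (m + 1) x ^ (-p) + L x * (Q m x * (-p) * Q (m + 1) x ^ (-p - 1))) x := by
      intro x hx
      have hw : HasDerivAt (fun y => Q (m + 1) y ^ (-p))
          (Q m x * (-p) * Q (m + 1) x ^ (-p - 1)) x := by
        have := (Q_hasDerivAt (m + 1) x).rpow_const (p := -p) (Or.inl (Q_pos (m+1) hx).ne')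
        simpa using this
      exact (hLd x).mul hw
    have hderiv_pos : ∀ x : ℝ, 0 < x →
        0 < N x * Q (m + 1) x ^ (-p) + L x * (Q m x * (-p) * Q (m + 1) x ^ (-p - 1)) := by
      intro x hx
      have hQ1 : 0 < Q (m + 1) x := Q_pos _ hx
      have hfac : Q (m + 1) x ^ (-p) = Q (m + 1) x ^ (-p - 1) * Q (m + 1) x := by
        rw [show -p = -p - 1 + 1 by ring, Real.rpow_add hQ1, Real.rpow_one]
        norm_num
      have hkey : ((m : ℝ) + 1) * (N x * Q (m + 1) x - p * (Q m x * L x)) =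
          ((m : ℝ) + 2) * Q (m + 2) x *
            (((m : ℝ) + 1) * (Q (m - 1) x * Q (m + 1) x) - (m : ℝ) * Q m x ^ 2) := by
        simp only [hN, hL, hp]
        field_simp
        ring
      have hih := ih x hx
      have h2 : 0 < N x * Q (m + 1) x - p * (Q m x * L x) := by
        have hQ2 : 0 < Q (m + 2) x := Q_pos _ hx
        have hr : 0 < ((m : ℝ) + 2) * Q (m + 2) x *
            (((m : ℝ) + 1) * (Q (m - 1) x * Q (m + 1) x) - (m : ℝ) * Q m x ^ 2) := by
          apply mul_pos (by positivity)
          linarith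
        rw [← hkey] at hr
        nlinarith [hr]
      have h3 : 0 < Q (m + 1) x ^ (-p - 1) := Real.rpow_pos_of_pos hQ1 _
      calc (0:ℝ) < Q (m + 1) x ^ (-p - 1) * (N x * Q (m + 1) x - p * (Q m x * L x)) := by
            exact mul_pos h3 h2
        _ = N x * Q (m + 1) x ^ (-p) + L x * (Q m x * (-p) * Q (m + 1) x ^ (-p - 1)) := by
            rw [hfac]; ring
    set c1 : ℝ := ((m : ℝ) + 2) / (m.factorial * (m + 2).factorial)
      + ((m : ℝ) + 1) / ((m + 1).factorial : ℝ) ^ 2 with hc1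
    set C : ℝ := c1 * ((m + 1).factorial : ℝ) ^ p with hC
    set B : ℝ → ℝ := fun x => C * (x ^ (m + 2) * Real.exp x ^ 2) with hB
    have hc1pos : 0 < c1 := by rw [hc1]; positivity
    have hbound : ∀ x : ℝ, 0 < x → ‖h x‖ ≤ B x := by
      intro x hx
      have E := Real.exp x
      have hQ1 : 0 < Q (m + 1) x := Q_pos _ hx
      have b1 : Q m x * Q (m + 2) x
          ≤ x ^ m / m.factorial * Real.exp x * (x ^ (m + 2) / (m + 2).factorial * Real.exp x) :=
        mul_le_mul (Q_le m x hx) (Q_le (m + 2) x hx) (Q_pos _ hx).le (by positivity)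
      have b2 : Q (m + 1) x ^ 2 ≤ (x ^ (m + 1) / (m + 1).factorial * Real.exp x) ^ 2 :=
        pow_le_pow_left₀ (Q_pos _ hx).le (Q_le (m + 1) x hx) 2
      have hxp1 : x ^ (2 * m + 2) = x ^ m * x ^ (m + 2) := by
        rw [← pow_add]; congr 1; ring
      have hxp2 : x ^ (2 * m + 2) = x ^ (m + 1) * x ^ (m + 1) := by
        rw [← pow_add]; congr 1; ring
      have habsL : |L x| ≤ c1 * (x ^ (2 * m + 2) * Real.exp x ^ 2) := by
        rw [abs_sub_le_iff]
        have hA : 0 ≤ ((m : ℝ) + 2) * (Q m x * Q (m + 2) x) := by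
          have := Q_pos m hx; have := Q_pos (m + 2) hx; positivity
        have hBB : 0 ≤ ((m : ℝ) + 1) * Q (m + 1) x ^ 2 := by positivity
        constructor
        · simp only [hc1]
          have e1 : ((m : ℝ) + 2) * (x ^ m / m.factorial * Real.exp x
              * (x ^ (m + 2) / (m + 2).factorial * Real.exp x))
              = ((m : ℝ) + 2) / (m.factorial * (m + 2).factorial)
                * (x ^ (2 * m + 2) * Real.exp x ^ 2) := by
            rw [hxp1]; ring
          have t1 : ((m : ℝ) + 2) * (Q m x * Q (m + 2) x)
              ≤ ((m : ℝ) + 2) / (m.factorial * (m + 2).factorial)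
                * (x ^ (2 * m + 2) * Real.exp x ^ 2) := by
            rw [← e1]; exact mul_le_mul_of_nonneg_left b1 (by positivity)
          have t2 : 0 ≤ ((m : ℝ) + 1) / ((m + 1).factorial : ℝ) ^ 2
              * (x ^ (2 * m + 2) * Real.exp x ^ 2) := by positivity
          linarith
        · simp only [hc1]
          have e2 : ((m : ℝ) + 1) * (x ^ (m + 1) / (m + 1).factorial * Real.exp x) ^ 2
              = ((m : ℝ) + 1) / ((m + 1).factorial : ℝ) ^ 2
                * (x ^ (2 * m + 2) * Real.exp x ^ 2) := by
            rw [pow_two, hxp2]; ring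
          have t2 : ((m : ℝ) + 1) * Q (m + 1) x ^ 2
              ≤ ((m : ℝ) + 1) / ((m + 1).factorial : ℝ) ^ 2
                * (x ^ (2 * m + 2) * Real.exp x ^ 2) := by
            rw [← e2]; exact mul_le_mul_of_nonneg_left b2 (by positivity)
          have t1 : 0 ≤ ((m : ℝ) + 2) / (m.factorial * (m + 2).factorial : ℝ)
              * (x ^ (2 * m + 2) * Real.exp x ^ 2) := by positivity
          linarith
      have hwb : Q (m + 1) x ^ (-p) ≤ ((m + 1).factorial : ℝ) ^ p / x ^ m := by
        have h1 : Q (m + 1) x ^ (-p) ≤ (x ^ (m + 1) / (m + 1).factorial) ^ (-p) :=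
          Real.rpow_le_rpow_of_nonpos (by positivity) (Q_ge (m + 1) hx.le) (neg_nonpos.2 hp0)
        refine h1.trans_eq ?_
        rw [Real.div_rpow (by positivity) (by positivity)]
        rw [Real.rpow_neg (by positivity : (0:ℝ) ≤ ((m+1).factorial : ℝ))]
        rw [← Real.rpow_natCast x (m + 1), ← Real.rpow_mul hx.le]
        have : ((m + 1 : ℕ) : ℝ) * (-p) = -(m : ℝ) := by
          rw [hp]; push_cast; field_simp
        rw [this, Real.rpow_neg hx.le, Real.rpow_natCast]
        field_simp
      have hw0 : 0 ≤ Q (m + 1) x ^ (-p) := Real.rpow_nonneg hQ1.le _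
      have := mul_le_mul habsL hwb hw0 (by positivity)
      calc ‖h x‖ = |L x| * Q (m + 1) x ^ (-p) := by
            rw [hh]; simp only [norm_mul, Real.norm_eq_abs]
            rw [abs_of_nonneg hw0]
        _ ≤ c1 * (x ^ (2 * m + 2) * Real.exp x ^ 2)
            * (((m + 1).factorial : ℝ) ^ p / x ^ m) := this
        _ = B x := by
            have hxne : x ≠ 0 := hx.ne'
            rw [hB, hC]
            simp only
            rw [hxp1]
            field_simp
    have hBlim : Filter.Tendsto B (nhdsWithin 0 (Set.Ioi 0)) (nhds 0) := by
      have hcont : Continuous B := by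
        rw [hB]
        exact continuous_const.mul ((continuous_pow _).mul (Real.continuous_exp.pow 2))
      have h0 : B 0 = 0 := by rw [hB]; simp
      have := hcont.tendsto 0
      rw [h0] at this
      exact this.mono_left nhdsWithin_le_nhds
    have hlim : Filter.Tendsto h (nhdsWithin 0 (Set.Ioi 0)) (nhds 0) := by
      apply squeeze_zero_norm' _ hBlim
      filter_upwards [self_mem_nhdsWithin] with x hx
      exact hbound x hx
    have hpos := pos_of_tendsto hlim hhd hderiv_pos
    intro x hx
    have hQ1 : 0 < Q (m + 1) x := Q_pos _ hx
    have hinv : Q (m + 1) x ^ (-p) * Q (m + 1) x ^ p = 1 := by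
      rw [← Real.rpow_add hQ1]; norm_num
    have hLpos : 0 < L x := by
      have h1 := hpos x hx
      have h2 : 0 < Q (m + 1) x ^ p := Real.rpow_pos_of_pos hQ1 _
      have h3 : 0 < h x * Q (m + 1) x ^ p := mul_pos h1 h2
      rw [hh] at h3
      simp only at h3
      rw [mul_assoc, hinv, mul_one] at h3
      exact h3
    rw [hL] at hLpos
    simp only at hLpos
    simp only [Nat.add_sub_cancel, show m + 1 + 1 = m + 2 from rfl]
    push_cast
    linarith

lemma tendsto_Q_atTop (k : ℕ) :
    Filter.Tendsto (fun x => Q k x / Real.exp x) Filter.atTop (nhds 1) := by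
  have hsum : Filter.Tendsto
      (fun x => ∑ i ∈ Finset.range k, (1 / (i.factorial : ℝ)) * (x ^ i * Real.exp (-x)))
      Filter.atTop (nhds 0) := by
    have := tendsto_finset_sum (Finset.range k) (fun i _ =>
      (Real.tendsto_pow_mul_exp_neg_atTop_nhds_zero i).const_mul (1 / (i.factorial : ℝ)))
    simpa using this
  have h1 := (tendsto_const_nhds (x := (1:ℝ)) (f := Filter.atTop)).sub hsum
  rw [sub_zero] at h1
  refine h1.congr (fun x => ?_)
  have he : Real.exp x ≠ 0 := (Real.exp_pos x).ne'
  simp only [Q, sub_div, Real.exp_neg]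
  rw [div_self he, Finset.sum_div]
  congr 1
  · apply Finset.sum_congr rfl
    intro i _
    field_simp

lemma tendsto_Q_zero (k : ℕ) :
    Filter.Tendsto (fun x => Q k x * k.factorial / x ^ k)
      (nhdsWithin 0 (Set.Ioi 0)) (nhds 1) := by
  have hexp : Filter.Tendsto (fun x : ℝ => Real.exp x) (nhdsWithin 0 (Set.Ioi 0)) (nhds 1) := by
    have := Real.continuous_exp.tendsto 0
    rw [Real.exp_zero] at this
    exact this.mono_left nhdsWithin_le_nhds
  apply tendsto_of_tendsto_of_tendsto_of_le_of_le' tendsto_const_nhds hexp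
  · filter_upwards [self_mem_nhdsWithin] with x hx
    have hx : (0:ℝ) < x := hx
    rw [le_div_iff₀ (by positivity), one_mul]
    have := Q_ge k hx.le
    have hf : (0:ℝ) < k.factorial := by positivity
    rw [div_le_iff₀ hf] at this
    linarith [this]
  · filter_upwards [self_mem_nhdsWithin] with x hx
    have hx : (0:ℝ) < x := hx
    rw [div_le_iff₀ (by positivity)]
    have := Q_le k x hx
    have hf : (0:ℝ) < k.factorial := by positivity
    calc Q k x * k.factorial ≤ x ^ k / k.factorial * Real.exp x * k.factorial := by
          nlinarith [this]
      _ = Real.exp x * x ^ k := by field_simp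

/-- `R_n(x) = e^x − Σ_{k=0}^n x^k/k!`, the remainder of the exponential series. -/
noncomputable def R (n : ℕ) (x : ℝ) : ℝ :=
  Real.exp x - ∑ k ∈ Finset.range (n + 1), x ^ k / k.factorial

theorem statement_11 (n : ℕ) (hn : 1 ≤ n) :
    (∀ x : ℝ, 0 < x →
      (n + 1 : ℝ) / (n + 2) ≤ R (n - 1) x * R (n + 1) x / (R n x) ^ 2 ∧
        R (n - 1) x * R (n + 1) x / (R n x) ^ 2 < 1) ∧
    Filter.Tendsto (fun x : ℝ => R (n - 1) x * R (n + 1) x / (R n x) ^ 2)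
      (nhdsWithin 0 (Set.Ioi 0)) (nhds ((n + 1 : ℝ) / (n + 2))) ∧
    Filter.Tendsto (fun x : ℝ => R (n - 1) x * R (n + 1) x / (R n x) ^ 2)
      Filter.atTop (nhds 1) := by
  obtain ⟨k, rfl⟩ : ∃ k, n = k + 1 := ⟨n - 1, (Nat.succ_pred_eq_of_pos hn).symm⟩
  have hRQ : ∀ (j : ℕ) (x : ℝ), R j x = Q (j + 1) x := fun _ _ => rfl
  have hfun : (fun x : ℝ => R (k + 1 - 1) x * R (k + 1 + 1) x / (R (k + 1) x) ^ 2)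
      = fun x : ℝ => Q (k + 1) x * Q (k + 3) x / (Q (k + 2) x) ^ 2 := by
    funext x
    rw [show k + 1 - 1 = k from rfl, hRQ, hRQ, hRQ]
  have hcast : ((k + 1 : ℕ) : ℝ) + 1 = (k : ℝ) + 2 := by push_cast; ring
  have hcast2 : ((k + 1 : ℕ) : ℝ) + 2 = (k : ℝ) + 3 := by push_cast; ring
  -- the constant
  have hconst : ((k + 2).factorial : ℝ) ^ 2 / ((k + 1).factorial * (k + 3).factorial)
      = ((k : ℝ) + 2) / ((k : ℝ) + 3) := by
    rw [show k + 2 = (k + 1) + 1 from rfl, show k + 3 = (k + 1) + 1 + 1 from rfl]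
    rw [Nat.factorial_succ ((k+1)+1), Nat.factorial_succ (k+1)]
    push_cast
    have h1 : ((k + 1).factorial : ℝ) ≠ 0 := by positivity
    field_simp
    ring
  refine ⟨?_, ?_, ?_⟩
  · intro x hx
    have hQ1 : 0 < Q (k + 1) x := Q_pos _ hx
    have hQ2 : 0 < Q (k + 2) x := Q_pos _ hx
    have hQ3 : 0 < Q (k + 3) x := Q_pos _ hx
    constructor
    · have ht := turan (k + 2) x hx
      rw [show k + 2 - 1 = k + 1 from rfl] at ht
      push_cast at ht
      rw [hRQ, hRQ, hRQ, show k + 1 - 1 = k from rfl, show k + 1 + 1 + 1 = k + 3 from rfl,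
        show k + 1 + 1 = k + 2 from rfl]
      rw [div_le_div_iff₀ (by positivity) (by positivity)]
      push_cast
      nlinarith [ht]
    · rw [hRQ, hRQ, hRQ, show k + 1 - 1 = k from rfl, show k + 1 + 1 + 1 = k + 3 from rfl,
        show k + 1 + 1 = k + 2 from rfl]
      rw [div_lt_one (by positivity)]
      -- Q (k+1) x * Q (k+3) x < Q (k+2) x ^ 2
      set a : ℝ := x ^ (k + 1) / (k + 1).factorial with ha
      set b : ℝ := x ^ (k + 2) / (k + 2).factorial with hb
      have ha0 : 0 < a := by rw [ha]; positivity
      have hb0 : 0 < b := by rw [hb]; positivity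
      have e1 : Q (k + 1) x = Q (k + 2) x + a := Q_succ (k + 1) x
      have e2 : Q (k + 2) x = Q (k + 3) x + b := Q_succ (k + 2) x
      have hr := Q_ratio (k + 1) x hx
      push_cast at hr
      -- b * (k + 2) = a * x
      have hab : b * ((k : ℝ) + 2) = a * x := by
        rw [ha, hb, show k + 2 = (k + 1) + 1 from rfl, Nat.factorial_succ (k + 1), pow_succ]
        push_cast
        have h1 : ((k + 1).factorial : ℝ) ≠ 0 := by positivity
        field_simp
        ring
      -- key : a * Q (k+2) x < b * Q (k+1) x
      have key : a * Q (k + 2) x < b * Q (k + 1) x := by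
        have hr' : ((k : ℝ) + 2) * Q (k + 2) x < x * Q (k + 1) x := by
          rw [show ((k:ℝ)+2) = (k:ℝ)+1+1 by ring]; exact hr
        have h1 : b * (((k : ℝ) + 2) * Q (k + 2) x) < b * (x * Q (k + 1) x) :=
          mul_lt_mul_of_pos_left hr' hb0
        have h2 : a * Q (k + 2) x * x < b * Q (k + 1) x * x := by nlinarith [hab, h1]
        exact lt_of_mul_lt_mul_right h2 hx.le
      nlinarith [key, e1, e2]
  · rw [hfun]
    have h1 := ((tendsto_Q_zero (k + 1)).mul (tendsto_Q_zero (k + 3))).div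
      ((tendsto_Q_zero (k + 2)).pow 2) (by norm_num)
    have h2 := h1.const_mul (((k + 2).factorial : ℝ) ^ 2 / ((k + 1).factorial * (k + 3).factorial))
    norm_num at h2
    rw [hconst] at h2
    rw [hcast, hcast2]
    refine h2.congr' ?_
    filter_upwards [self_mem_nhdsWithin] with x hx
    have hx : (0:ℝ) < x := hx
    have hQ2 : 0 < Q (k + 2) x := Q_pos _ hx
    have hf1 : ((k + 1).factorial : ℝ) ≠ 0 := by positivity
    have hf2 : ((k + 2).factorial : ℝ) ≠ 0 := by positivity
    have hf3 : ((k + 3).factorial : ℝ) ≠ 0 := by positivity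
    have hxn : x ≠ 0 := hx.ne'
    have f1 : ((k+2).factorial : ℝ) = ((k:ℝ)+2) * (k+1).factorial := by
      rw [show k+2 = (k+1)+1 from rfl, Nat.factorial_succ]; push_cast; ring
    have f2 : ((k+3).factorial : ℝ) = ((k:ℝ)+3) * (k+2).factorial := by
      rw [show k+3 = (k+2)+1 from rfl, Nat.factorial_succ]; push_cast; ring
    have hfact : ((k:ℝ)+2) * ((k+1).factorial:ℝ) * ((k+3).factorial:ℝ)
        = ((k:ℝ)+3) * ((k+2).factorial:ℝ)^2 := by
      rw [f2, f1]; ring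
    field_simp
    linear_combination (Q (k+1) x * Q (k+3) x * (x ^ (k + 2)) ^ 2) * hfact
  · rw [hfun]
    have h1 := ((tendsto_Q_atTop (k + 1)).mul (tendsto_Q_atTop (k + 3))).div
      ((tendsto_Q_atTop (k + 2)).pow 2) (by norm_num)
    norm_num at h1
    refine h1.congr' ?_
    filter_upwards [eventually_gt_atTop 0] with x hx
    have hQ2 : 0 < Q (k + 2) x := Q_pos _ hx
    have he : Real.exp x ≠ 0 := (Real.exp_pos x).ne'
    rw [Pi.div_apply]
    field_simp
end

section
/- For every n ∈ ℕ, n ≥ 1, the function g_n(x) = ₁F₁(1; n+1; x)·₁F₁(1; n+3; x) / [₁F₁(1; n+2; x)]² is monotone increasing on [0,∞). -/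
/-- The ascending factorial (Pochhammer symbol) `(a)_n = a(a+1)⋯(a+n-1)`. -/
noncomputable def ascPoch (a : ℝ) (n : ℕ) : ℝ :=
  ∏ k ∈ Finset.range n, (a + k)

/-- The Kummer confluent hypergeometric function
`₁F₁(a;b;x) = Σ_{n=0}^∞ (a)_n/((b)_n n!) x^n`. -/
noncomputable def kummer (a b x : ℝ) : ℝ :=
  ∑' n : ℕ, ascPoch a n / (ascPoch b n * n.factorial) * x ^ n

open Finset

namespace S13

lemma choose_mono_half (N a : ℕ) : ∀ b, a ≤ b → 2*b ≤ N+1 → N.choose a ≤ N.choose b := by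
  intro b
  induction b with
  | zero => intro h _; simp_all
  | succ b ih =>
    intro hab hb
    rcases Nat.lt_or_ge a (b+1) with h | h
    · have h1 : N.choose a ≤ N.choose b := ih (by omega) (by omega)
      have hr := Nat.choose_succ_right_eq N b
      have h2 : N.choose b * (b+1) ≤ N.choose (b+1) * (b+1) := by
        rw [hr]
        exact Nat.mul_le_mul_left _ (by omega)
      have h3 : N.choose b ≤ N.choose (b+1) := Nat.le_of_mul_le_mul_right h2 (by omega)
      omega
    · have : a = b+1 := by omega
      simp [this]

lemma choose_window (p k i : ℕ) (hi : i ≤ k) :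
    (2*p+k+3).choose (p+1) ≤ (2*p+k+3).choose (p+1+i) := by
  rcases le_or_gt (2*(p+1+i)) (2*p+k+3+1) with h | h
  · exact choose_mono_half _ (p+1) _ (by omega) h
  · have hsy : (2*p+k+3).choose (2*p+k+3 - (p+1+i)) = (2*p+k+3).choose (p+1+i) :=
      Nat.choose_symm (by omega)
    rw [← hsy, show 2*p+k+3 - (p+1+i) = p+(k+2-i) from by omega]
    exact choose_mono_half _ (p+1) _ (by omega) (by omega)

/-- window sum of binomial coefficients -/
def A2 (p k : ℕ) : ℕ := ∑ i ∈ range (k+1), (2*p+k+3).choose (p+1+i)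

lemma A2_lower (p k : ℕ) : (k+1) * (2*p+k+3).choose (p+1) ≤ A2 p k := by
  have : (k+1) * (2*p+k+3).choose (p+1) = ∑ _i ∈ range (k+1), (2*p+k+3).choose (p+1) := by
    rw [Finset.sum_const, card_range, smul_eq_mul]
  rw [this]
  exact Finset.sum_le_sum fun i hi => choose_window p k i (Nat.lt_succ_iff.mp (mem_range.mp hi))

lemma sum_shift (p k M : ℕ) :
    (∑ i ∈ range (k+1), M.choose (p+i)) + M.choose (p+1+k)
      = M.choose p + ∑ i ∈ range (k+1), M.choose (p+1+i) := by
  rw [Finset.sum_range_succ' (fun i => M.choose (p+i)) k,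
      Finset.sum_range_succ (fun i => M.choose (p+1+i)) k]
  have h1 : ∀ i, M.choose (p+(i+1)) = M.choose (p+1+i) := fun i => by ring_nf
  simp only [h1, Nat.add_zero]
  ring

lemma A2_succ (p k : ℕ) :
    A2 p (k+1) =
      2 * A2 p k + (2*p+k+3).choose (p+k+2) + (2*p+k+3).choose (p+k+3) := by
  have hs : A2 p (k+1) = ∑ i ∈ range (k+2), (((2*p+k+3)+1).choose (p+1+i)) := by
    rw [A2, show 2*p+(k+1)+3 = (2*p+k+3) + 1 from by ring]
  have hpas : ∀ i, ((2*p+k+3)+1).choose (p+1+i)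
      = (2*p+k+3).choose (p+i) + (2*p+k+3).choose (p+1+i) := by
    intro i
    have h := Nat.choose_succ_succ (2*p+k+3) (p+i)
    simpa [Nat.succ_eq_add_one, show p+i+1 = p+1+i from by ring] using h
  have e2 : ∑ i ∈ range (k+2), (2*p+k+3).choose (p+1+i)
      = A2 p k + (2*p+k+3).choose (p+k+2) := by
    rw [Finset.sum_range_succ (fun i => (2*p+k+3).choose (p+1+i)) (k+1),
        show p+1+(k+1) = p+k+2 from by ring]
    rfl
  have e1 := sum_shift p (k+1) (2*p+k+3)
  rw [e2, show p+1+(k+1) = p+k+2 from by ring, show k+1+1 = k+2 from by omega] at e1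
  have sym : (2*p+k+3).choose p = (2*p+k+3).choose (p+k+3) := by
    have h := Nat.choose_symm (show p+k+3 ≤ 2*p+k+3 from by omega)
    rwa [show 2*p+k+3 - (p+k+3) = p from by omega] at h
  rw [hs]
  simp only [hpas]
  rw [Finset.sum_add_distrib, e2]
  omega


/-- the key discrete quantity -/
noncomputable def Ir (p k : ℕ) : ℝ :=
  ((k:ℝ)*((k:ℝ)+1) - 6*((p:ℝ)+2)) * (A2 p k : ℝ)
  + ((p:ℝ)+2)*(3*(p:ℝ)+2*(k:ℝ)+9) *
      (((2*p+k+3).choose (p+2) : ℝ) - ((2*p+k+3).choose (p+k+3) : ℝ))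

lemma r1 (p k : ℕ) : (2*p+k+3).choose (p+2) * (p+2) = (2*p+k+3).choose (p+1) * (p+k+2) := by
  have h := Nat.choose_succ_right_eq (2*p+k+3) (p+1)
  rwa [show 2*p+k+3 - (p+1) = p+k+2 from by omega] at h

lemma r2 (p k : ℕ) : (2*p+k+3).choose (p+k+3) * (p+k+3) = (2*p+k+3).choose (p+k+2) * (p+1) := by
  have h := Nat.choose_succ_right_eq (2*p+k+3) (p+k+2)
  rwa [show p+k+2+1 = p+k+3 from by omega, show 2*p+k+3 - (p+k+2) = p+1 from by omega] at h

lemma r3 (p k : ℕ) : (2*p+k+3).choose (p+k+4) * (p+k+4) = (2*p+k+3).choose (p+k+3) * p := by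
  have h := Nat.choose_succ_right_eq (2*p+k+3) (p+k+3)
  rwa [show p+k+3+1 = p+k+4 from by omega, show 2*p+k+3 - (p+k+3) = p from by omega] at h

lemma s1 (p k : ℕ) : (2*p+k+3).choose (p+k+2) = (2*p+k+3).choose (p+1) := by
  have h := Nat.choose_symm (show p+1 ≤ 2*p+k+3 from by omega)
  rwa [show 2*p+k+3 - (p+1) = p+k+2 from by omega] at h

lemma Ir_zero (p : ℕ) : Ir p 0 = 0 := by
  have hA : A2 p 0 = (2*p+3).choose (p+1) := by simp [A2]
  have hs : (2*p+0+3).choose (p+0+3) * ((p:ℝ)+3) = (2*p+0+3).choose (p+2) * ((p:ℝ)+1) := by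
    exact_mod_cast congrArg (Nat.cast : ℕ → ℝ) (r2 p 0)
  have hsym : ((2*p+0+3).choose (p+2) : ℝ) = ((2*p+0+3).choose (p+1) : ℝ) := by
    exact_mod_cast congrArg (Nat.cast : ℕ → ℝ) (s1 p 0)
  rw [Ir]
  rw [show (2*p+0+3) = 2*p+3 from by omega, show (p+0+3) = p+3 from by omega] at *
  push_cast
  rw [hA] at *
  push_cast at hs hsym ⊢
  nlinarith [hs, hsym]

lemma Ir_nonneg (p k : ℕ) : 0 ≤ Ir p k := by
  induction k with
  | zero => rw [Ir_zero]
  | succ k ih =>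
    set M := 2*p+k+3 with hM
    set b0 : ℝ := (M.choose (p+1) : ℝ) with hb0
    have hb0pos : (0:ℝ) < b0 := by
      rw [hb0]; exact_mod_cast Nat.choose_pos (show p+1 ≤ M from by omega)
    -- ratio identities in ℝ
    have hd2 : ((p:ℝ)+2) ≠ 0 := by positivity
    have hd3 : ((p:ℝ)+(k:ℝ)+3) ≠ 0 := by positivity
    have hd4 : ((p:ℝ)+(k:ℝ)+4) ≠ 0 := by positivity
    have hc1 : (M.choose (p+k+2) : ℝ) = b0 := by
      rw [hb0]; exact_mod_cast congrArg (Nat.cast : ℕ → ℝ) (s1 p k)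
    have hc2 : (M.choose (p+2) : ℝ) = ((p:ℝ)+(k:ℝ)+2) * b0 / ((p:ℝ)+2) := by
      rw [eq_div_iff hd2]
      have := congrArg (Nat.cast : ℕ → ℝ) (r1 p k)
      push_cast at this
      rw [hb0]; push_cast; linarith [this]
    have hc3 : (M.choose (p+k+3) : ℝ) = ((p:ℝ)+1) * b0 / ((p:ℝ)+(k:ℝ)+3) := by
      rw [eq_div_iff hd3]
      have := congrArg (Nat.cast : ℕ → ℝ) (r2 p k)
      push_cast at this
      rw [hc1] at this
      push_cast
      linarith [this]
    have hc4 : (M.choose (p+k+4) : ℝ)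
        = (p:ℝ) * ((p:ℝ)+1) * b0 / (((p:ℝ)+(k:ℝ)+3) * ((p:ℝ)+(k:ℝ)+4)) := by
      rw [eq_div_iff (by positivity)]
      have h3 := congrArg (Nat.cast : ℕ → ℝ) (r3 p k)
      push_cast at h3
      rw [hc3] at h3
      field_simp at h3
      push_cast
      linarith [h3]
    -- Pascal for the new row
    have hP1 : ((M+1).choose (p+2) : ℝ) = (M.choose (p+1) : ℝ) + (M.choose (p+2) : ℝ) := by
      have h := Nat.choose_succ_succ M (p+1)
      simp only [Nat.succ_eq_add_one] at h
      rw [show p+1+1 = p+2 from by omega] at h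
      exact_mod_cast congrArg (Nat.cast : ℕ → ℝ) h
    have hP2 : ((M+1).choose (p+k+4) : ℝ) = (M.choose (p+k+3) : ℝ) + (M.choose (p+k+4) : ℝ) := by
      have h := Nat.choose_succ_succ M (p+k+3)
      simp only [Nat.succ_eq_add_one] at h
      rw [show p+k+3+1 = p+k+4 from by omega] at h
      exact_mod_cast congrArg (Nat.cast : ℕ → ℝ) h
    have hA : (A2 p (k+1) : ℝ) = 2 * (A2 p k : ℝ) + (M.choose (p+k+2) : ℝ) + (M.choose (p+k+3) : ℝ) := by
      exact_mod_cast congrArg (Nat.cast : ℕ → ℝ) (A2_succ p k)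
    -- the step identity
    have hstep : Ir p (k+1) = 2 * Ir p k
        + 4*((k:ℝ)+1) * ((A2 p k : ℝ) - ((k:ℝ)+1) * b0)
        + (((k:ℝ)+1)*((k:ℝ)+2)*((3*(k:ℝ)+4)*((k:ℝ)+3)+4*((p:ℝ)+1)*((k:ℝ)+2)))
          / (((p:ℝ)+(k:ℝ)+3)*((p:ℝ)+(k:ℝ)+4)) * b0 := by
      rw [Ir, Ir]
      rw [show 2*p+(k+1)+3 = M+1 from by omega, show p+(k+1)+3 = p+k+4 from by omega]
      rw [hA, hP1, hP2, hc1, hc2, hc3, hc4, ← hb0]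
      push_cast
      field_simp
      ring
    rw [hstep]
    have hwin : ((k:ℝ)+1) * b0 ≤ (A2 p k : ℝ) := by
      rw [hb0]
      exact_mod_cast A2_lower p k
    have t1 : (0:ℝ) ≤ 2 * Ir p k := by linarith
    have t2 : (0:ℝ) ≤ 4*((k:ℝ)+1) * ((A2 p k : ℝ) - ((k:ℝ)+1) * b0) := by
      have : (0:ℝ) ≤ (A2 p k : ℝ) - ((k:ℝ)+1) * b0 := by linarith
      positivity
    have t3 : (0:ℝ) ≤ (((k:ℝ)+1)*((k:ℝ)+2)*((3*(k:ℝ)+4)*((k:ℝ)+3)+4*((p:ℝ)+1)*((k:ℝ)+2)))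
          / (((p:ℝ)+(k:ℝ)+3)*((p:ℝ)+(k:ℝ)+4)) * b0 := by positivity
    linarith


def A1n (p k : ℕ) : ℕ := ∑ i ∈ range (k+1), (2*p+k+5).choose (p+2+i)
def A3n (p k : ℕ) : ℕ := ∑ i ∈ range (k+1), (2*p+k+4).choose (p+1+i)
def A4n (p k : ℕ) : ℕ := ∑ i ∈ range (k+1), (2*p+k+4).choose (p+2+i)

lemma hA3n (p k : ℕ) : A3n p k + (2*p+k+3).choose (p+2)
    = 2 * A2 p k + (2*p+k+3).choose (p+k+3) := by
  have hpas : ∀ i, (2*p+k+4).choose (p+1+i)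
      = (2*p+k+3).choose (p+i) + (2*p+k+3).choose (p+1+i) := by
    intro i
    have h := Nat.choose_succ_succ (2*p+k+3) (p+i)
    simp only [Nat.succ_eq_add_one] at h
    rwa [show p+i+1 = p+1+i from by ring, show 2*p+k+3+1 = 2*p+k+4 from by ring] at h
  have hsplit : A3n p k = (∑ i ∈ range (k+1), (2*p+k+3).choose (p+i)) + A2 p k := by
    rw [A3n]
    simp only [hpas]
    rw [Finset.sum_add_distrib]
    rfl
  have hshift := sum_shift p k (2*p+k+3)
  have hs2 : (2*p+k+3).choose (p+1+k) = (2*p+k+3).choose (p+2) := by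
    have h := Nat.choose_symm (show p+2 ≤ 2*p+k+3 from by omega)
    rwa [show 2*p+k+3 - (p+2) = p+1+k from by omega] at h
  have hs3 : (2*p+k+3).choose p = (2*p+k+3).choose (p+k+3) := by
    have h := Nat.choose_symm (show p+k+3 ≤ 2*p+k+3 from by omega)
    rwa [show 2*p+k+3 - (p+k+3) = p from by omega] at h
  have hA2 : A2 p k = ∑ i ∈ range (k+1), (2*p+k+3).choose (p+1+i) := rfl
  omega

lemma hA4n (p k : ℕ) : A4n p k + (2*p+k+4).choose (p+1)
    = A3n p k + (2*p+k+4).choose (p+k+2) := by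
  have h := sum_shift (p+1) k (2*p+k+4)
  have e1 : ∀ i, p+1+1+i = p+2+i := fun i => by ring
  have e2 : p+1+1+k = p+k+2 := by ring
  simp only [e1, e2] at h
  have hA3 : A3n p k = ∑ i ∈ range (k+1), (2*p+k+4).choose (p+1+i) := rfl
  have hA4 : A4n p k = ∑ i ∈ range (k+1), (2*p+k+4).choose (p+2+i) := rfl
  omega

lemma hA1n (p k : ℕ) : A1n p k = A3n p k + A4n p k := by
  have hpas : ∀ i, (2*p+k+5).choose (p+2+i)
      = (2*p+k+4).choose (p+1+i) + (2*p+k+4).choose (p+2+i) := by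
    intro i
    have h := Nat.choose_succ_succ (2*p+k+4) (p+1+i)
    simp only [Nat.succ_eq_add_one] at h
    rwa [show p+1+i+1 = p+2+i from by ring, show 2*p+k+4+1 = 2*p+k+5 from by ring] at h
  rw [A1n]
  simp only [hpas]
  rw [Finset.sum_add_distrib]
  rfl

/-- A1 in terms of A2 and the difference -/
lemma A1_eq (p k : ℕ) : (A1n p k : ℝ)
    = 4 * (A2 p k : ℝ) + ((2*p+k+3).choose (p+k+3) : ℝ) - ((2*p+k+3).choose (p+2) : ℝ) := by
  have h1 := hA1n p k
  have h2 := hA4n p k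
  have h3 := hA3n p k
  have hsymA : (2*p+k+4).choose (p+1) = (2*p+k+4).choose (p+k+3) := by
    have h := Nat.choose_symm (show p+k+3 ≤ 2*p+k+4 from by omega)
    rwa [show 2*p+k+4 - (p+k+3) = p+1 from by omega] at h
  have hp1 : (2*p+k+4).choose (p+k+2) = (2*p+k+3).choose (p+k+1) + (2*p+k+3).choose (p+k+2) := by
    have h := Nat.choose_succ_succ (2*p+k+3) (p+k+1)
    simp only [Nat.succ_eq_add_one] at h
    rwa [show p+k+1+1 = p+k+2 from by ring, show 2*p+k+3+1 = 2*p+k+4 from by ring] at h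
  have hp2 : (2*p+k+4).choose (p+k+3) = (2*p+k+3).choose (p+k+2) + (2*p+k+3).choose (p+k+3) := by
    have h := Nat.choose_succ_succ (2*p+k+3) (p+k+2)
    simp only [Nat.succ_eq_add_one] at h
    rwa [show p+k+2+1 = p+k+3 from by ring, show 2*p+k+3+1 = 2*p+k+4 from by ring] at h
  have hs2 : (2*p+k+3).choose (p+k+1) = (2*p+k+3).choose (p+2) := by
    have h := Nat.choose_symm (show p+2 ≤ 2*p+k+3 from by omega)
    rwa [show 2*p+k+3 - (p+2) = p+k+1 from by omega] at h
  have c1 : (A1n p k : ℝ) = (A3n p k : ℝ) + (A4n p k : ℝ) := by exact_mod_cast h1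
  have c2 : (A4n p k : ℝ) + ((2*p+k+4).choose (p+1) : ℝ)
      = (A3n p k : ℝ) + ((2*p+k+4).choose (p+k+2) : ℝ) := by exact_mod_cast h2
  have c3 : (A3n p k : ℝ) + ((2*p+k+3).choose (p+2) : ℝ)
      = 2*(A2 p k : ℝ) + ((2*p+k+3).choose (p+k+3) : ℝ) := by exact_mod_cast h3
  have c4 : ((2*p+k+4).choose (p+1) : ℝ) = ((2*p+k+4).choose (p+k+3) : ℝ) := by exact_mod_cast hsymA
  have c5 : ((2*p+k+4).choose (p+k+2) : ℝ)
      = ((2*p+k+3).choose (p+k+1) : ℝ) + ((2*p+k+3).choose (p+k+2) : ℝ) := by exact_mod_cast hp1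
  have c6 : ((2*p+k+4).choose (p+k+3) : ℝ)
      = ((2*p+k+3).choose (p+k+2) : ℝ) + ((2*p+k+3).choose (p+k+3) : ℝ) := by exact_mod_cast hp2
  have c7 : ((2*p+k+3).choose (p+k+1) : ℝ) = ((2*p+k+3).choose (p+2) : ℝ) := by exact_mod_cast hs2
  linarith


lemma Sfrac (a b k : ℕ) :
    ∑ i ∈ range (k+1), ((a.factorial : ℝ)/((a+i).factorial)) * ((b.factorial : ℝ)/((b+(k-i)).factorial))
    = (a.factorial : ℝ) * (b.factorial : ℝ) / ((a+b+k).factorial : ℝ)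
      * ∑ i ∈ range (k+1), ((a+b+k).choose (a+i) : ℝ) := by
  rw [Finset.mul_sum]
  refine Finset.sum_congr rfl fun i hi => ?_
  have hik : i ≤ k := Nat.lt_succ_iff.mp (mem_range.mp hi)
  have key : (a+b+k).choose (a+i) * (a+i).factorial * (b+(k-i)).factorial = (a+b+k).factorial := by
    have h := Nat.add_choose_mul_factorial_mul_factorial (a+i) (b+(k-i))
    have hsymm : ((a+i)+(b+(k-i))).choose (b+(k-i)) = ((a+i)+(b+(k-i))).choose (a+i) := by
      have h2 := Nat.choose_symm (show a+i ≤ (a+i)+(b+(k-i)) from by omega)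
      rwa [show (a+i)+(b+(k-i)) - (a+i) = b+(k-i) from by omega] at h2
    rw [hsymm] at h
    rwa [show (a+i)+(b+(k-i)) = a+b+k from by omega] at h
  have keyR : ((a+b+k).choose (a+i) : ℝ) * ((a+i).factorial : ℝ) * ((b+(k-i)).factorial : ℝ)
      = ((a+b+k).factorial : ℝ) := by exact_mod_cast key
  have f1 : ((a+i).factorial : ℝ) ≠ 0 := by positivity
  have f2 : ((b+(k-i)).factorial : ℝ) ≠ 0 := by positivity
  have f3 : ((a+b+k).factorial : ℝ) ≠ 0 := by positivity
  field_simp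
  linear_combination (-1 : ℝ) * keyR


noncomputable def wk (p k : ℕ) : ℝ :=
  ((p:ℝ)+1) * ∑ i ∈ range (k+1),
      (((p+2).factorial : ℝ)/((p+2+i).factorial)) * (((p+3).factorial : ℝ)/((p+3+(k-i)).factorial))
  + ((p:ℝ)+3) * ∑ i ∈ range (k+1),
      (((p+1).factorial : ℝ)/((p+1+i).factorial)) * (((p+2).factorial : ℝ)/((p+2+(k-i)).factorial))
  - 2*((p:ℝ)+2) * ∑ i ∈ range (k+1),
      (((p+1).factorial : ℝ)/((p+1+i).factorial)) * (((p+3).factorial : ℝ)/((p+3+(k-i)).factorial))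

lemma wk_eq (p k : ℕ) :
    wk p k = ((p:ℝ)+3) * ((p+1).factorial : ℝ) * ((p+2).factorial : ℝ)
      / ((2*p+k+5).factorial : ℝ) * Ir p k := by
  have h1 := Sfrac (p+2) (p+3) k
  have h2 := Sfrac (p+1) (p+2) k
  have h3 := Sfrac (p+1) (p+3) k
  rw [show p+2+(p+3)+k = 2*p+k+5 from by ring] at h1
  rw [show p+1+(p+2)+k = 2*p+k+3 from by ring] at h2
  rw [show p+1+(p+3)+k = 2*p+k+4 from by ring] at h3
  have hA1 : ∑ i ∈ range (k+1), ((2*p+k+5).choose (p+2+i) : ℝ) = (A1n p k : ℝ) := by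
    rw [A1n]; push_cast; rfl
  have hA2 : ∑ i ∈ range (k+1), ((2*p+k+3).choose (p+1+i) : ℝ) = (A2 p k : ℝ) := by
    rw [A2]; push_cast; rfl
  have hA3 : ∑ i ∈ range (k+1), ((2*p+k+4).choose (p+1+i) : ℝ) = (A3n p k : ℝ) := by
    rw [A3n]; push_cast; rfl
  rw [hA1] at h1; rw [hA2] at h2; rw [hA3] at h3
  have hA3e : (A3n p k : ℝ)
      = 2*(A2 p k : ℝ) + ((2*p+k+3).choose (p+k+3) : ℝ) - ((2*p+k+3).choose (p+2) : ℝ) := by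
    have := hA3n p k
    have hc : (A3n p k : ℝ) + ((2*p+k+3).choose (p+2) : ℝ)
        = 2*(A2 p k : ℝ) + ((2*p+k+3).choose (p+k+3) : ℝ) := by exact_mod_cast this
    linarith
  rw [wk, h1, h2, h3, hA3e, A1_eq p k, Ir]
  have fe1 : ((2*p+k+5).factorial : ℝ)
      = (2*(p:ℝ)+(k:ℝ)+5) * (2*(p:ℝ)+(k:ℝ)+4) * ((2*p+k+3).factorial : ℝ) := by
    rw [show 2*p+k+5 = (2*p+k+4)+1 from by ring, Nat.factorial_succ,
        show 2*p+k+4 = (2*p+k+3)+1 from by ring, Nat.factorial_succ]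
    push_cast; ring
  have fe2 : ((2*p+k+4).factorial : ℝ) = (2*(p:ℝ)+(k:ℝ)+4) * ((2*p+k+3).factorial : ℝ) := by
    rw [show 2*p+k+4 = (2*p+k+3)+1 from by ring, Nat.factorial_succ]
    push_cast; ring
  have fe3 : ((p+2).factorial : ℝ) = ((p:ℝ)+2) * ((p+1).factorial : ℝ) := by
    rw [show p+2 = (p+1)+1 from by ring, Nat.factorial_succ]; push_cast; ring
  have fe4 : ((p+3).factorial : ℝ) = ((p:ℝ)+3) * ((p:ℝ)+2) * ((p+1).factorial : ℝ) := by
    rw [show p+3 = (p+2)+1 from by ring, Nat.factorial_succ]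
    push_cast
    rw [fe3]
    push_cast
    ring
  rw [fe1, fe2, fe3, fe4]
  have q1 : ((p+1).factorial : ℝ) ≠ 0 := by positivity
  have q2 : ((2*p+k+3).factorial : ℝ) ≠ 0 := by positivity
  have q3 : (2*(p:ℝ)+(k:ℝ)+5) ≠ 0 := by positivity
  have q4 : (2*(p:ℝ)+(k:ℝ)+4) ≠ 0 := by positivity
  field_simp
  ring

lemma wk_nonneg (p k : ℕ) : 0 ≤ wk p k := by
  rw [wk_eq]
  apply mul_nonneg _ (Ir_nonneg p k)
  positivity


/-! ### The function F m x = ∑ x^k m!/(m+k)! -/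

noncomputable def F (m : ℕ) (x : ℝ) : ℝ := ∑' k : ℕ, x^k * ((m.factorial : ℝ)/((m+k).factorial))

lemma coef_nonneg (m k : ℕ) : (0:ℝ) ≤ (m.factorial : ℝ)/((m+k).factorial) := by positivity

lemma coef_le (m k : ℕ) : (m.factorial : ℝ)/((m+k).factorial) ≤ 1/(k.factorial : ℝ) := by
  rw [div_le_div_iff₀ (by positivity) (by positivity), one_mul]
  have h : m.factorial * k.factorial ≤ (m+k).factorial :=
    Nat.le_of_dvd (Nat.factorial_pos _) (Nat.factorial_mul_factorial_dvd_factorial_add m k)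
  exact_mod_cast h

lemma normbound (m k : ℕ) (x : ℝ) :
    ‖x^k * ((m.factorial : ℝ)/((m+k).factorial))‖ ≤ |x|^k / (k.factorial : ℝ) := by
  rw [norm_mul, norm_pow, Real.norm_eq_abs, Real.norm_eq_abs,
      abs_of_nonneg (coef_nonneg m k)]
  calc |x|^k * ((m.factorial : ℝ)/((m+k).factorial)) ≤ |x|^k * (1/(k.factorial : ℝ)) := by
        exact mul_le_mul_of_nonneg_left (coef_le m k) (by positivity)
    _ = |x|^k / (k.factorial : ℝ) := by ring

lemma summable_norm_F (m : ℕ) (x : ℝ) :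
    Summable (fun k => ‖x^k * ((m.factorial : ℝ)/((m+k).factorial))‖) :=
  Summable.of_nonneg_of_le (fun k => norm_nonneg _) (fun k => normbound m k x)
    (Real.summable_pow_div_factorial |x|)

lemma summable_F (m : ℕ) (x : ℝ) :
    Summable (fun k => x^k * ((m.factorial : ℝ)/((m+k).factorial))) :=
  (summable_norm_F m x).of_norm

lemma F_zero (m : ℕ) : F m 1 = F m 1 := rfl

lemma F_at_zero (m : ℕ) : F m 0 = 1 := by
  rw [F, tsum_eq_single 0]
  · simp [div_self (show (m.factorial:ℝ) ≠ 0 from by positivity)]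
  · intro b hb
    simp [zero_pow hb]

lemma one_le_F (m : ℕ) (x : ℝ) (hx : 0 ≤ x) : 1 ≤ F m x := by
  have h := Summable.le_tsum (summable_F m x) 0
    (fun j _ => by positivity)
  simpa [F, div_self (show (m.factorial:ℝ) ≠ 0 from by positivity)] using h

lemma F_pos (m : ℕ) (x : ℝ) (hx : 0 ≤ x) : 0 < F m x := lt_of_lt_of_le one_pos (one_le_F m x hx)

lemma exp_tsum (x : ℝ) : Real.exp x = ∑' k : ℕ, x^k / (k.factorial : ℝ) := by
  rw [Real.exp_eq_exp_ℝ, NormedSpace.exp_eq_tsum_div]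

lemma F_le_exp (m : ℕ) (x : ℝ) (hx : 0 ≤ x) : F m x ≤ Real.exp x := by
  rw [exp_tsum, F]
  apply Summable.tsum_le_tsum _ (summable_F m x) (Real.summable_pow_div_factorial x)
  intro k
  calc x^k * ((m.factorial : ℝ)/((m+k).factorial)) ≤ x^k * (1/(k.factorial : ℝ)) := by
        apply mul_le_mul_of_nonneg_left (coef_le m k) (by positivity)
    _ = x^k / (k.factorial : ℝ) := by ring

/-- The contiguous recurrence -/
lemma F_rec (m : ℕ) (x : ℝ) :
    ((m:ℝ)+1) * F m x = ((m:ℝ)+1) + x * F (m+1) x := by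
  rw [F, ← tsum_mul_left]
  rw [Summable.tsum_eq_zero_add (by exact (summable_F m x).mul_left _)]
  have e0 : ((m:ℝ)+1) * (x^0 * ((m.factorial : ℝ)/((m+0).factorial))) = (m:ℝ)+1 := by
    simp [div_self (show (m.factorial:ℝ) ≠ 0 from by positivity)]
  rw [e0]
  congr 1
  rw [F, ← tsum_mul_left]
  apply tsum_congr
  intro k
  have hf : (((m+1)+k).factorial : ℝ) = ((m+(k+1)).factorial : ℝ) := by
    rw [show (m+1)+k = m+(k+1) from by ring]
  have hfs : ((m+1).factorial : ℝ) = ((m:ℝ)+1) * (m.factorial : ℝ) := by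
    rw [Nat.factorial_succ]; push_cast; ring
  rw [hfs]
  field_simp [hf]
  ring

/-- kummer with a = 1 equals F -/
lemma ascPoch_one (k : ℕ) : ascPoch 1 k = (k.factorial : ℝ) := by
  induction k with
  | zero => simp [ascPoch]
  | succ k ih =>
    rw [show ascPoch 1 (k+1) = ascPoch 1 k * (1+(k:ℝ)) from Finset.prod_range_succ _ _, ih, Nat.factorial_succ]
    push_cast; ring

lemma ascPoch_nat (m k : ℕ) : ascPoch ((m:ℝ)+1) k * (m.factorial : ℝ) = ((m+k).factorial : ℝ) := by
  induction k with
  | zero => simp [ascPoch]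
  | succ k ih =>
    rw [show ascPoch ((m:ℝ)+1) (k+1) = ascPoch ((m:ℝ)+1) k * (((m:ℝ)+1)+(k:ℝ)) from Finset.prod_range_succ _ _]
    rw [show m+(k+1) = (m+k)+1 from by ring, Nat.factorial_succ]
    push_cast
    push_cast at ih
    nlinarith [ih]

lemma kummer_eq_F (m : ℕ) (x : ℝ) : kummer 1 ((m:ℝ)+1) x = F m x := by
  rw [kummer, F]
  apply tsum_congr
  intro k
  rw [ascPoch_one]
  have h := ascPoch_nat m k
  have hm : (m.factorial : ℝ) ≠ 0 := by positivity
  have hk : (k.factorial : ℝ) ≠ 0 := by positivity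
  have hmk : ((m+k).factorial : ℝ) ≠ 0 := by positivity
  have hap : ascPoch ((m:ℝ)+1) k = ((m+k).factorial : ℝ) / (m.factorial : ℝ) := by
    rw [eq_div_iff hm]; exact h
  rw [hap]
  field_simp


/-! ### Cauchy products -/

lemma F_mul (a b : ℕ) (x : ℝ) :
    F a x * F b x = ∑' k : ℕ, x^k *
      ∑ i ∈ range (k+1), ((a.factorial : ℝ)/((a+i).factorial)) * ((b.factorial : ℝ)/((b+(k-i)).factorial)) := by
  rw [F, F, tsum_mul_tsum_eq_tsum_sum_range_of_summable_norm (summable_norm_F a x) (summable_norm_F b x)]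
  apply tsum_congr
  intro k
  rw [Finset.mul_sum]
  apply Finset.sum_congr rfl
  intro i hi
  have hik : i ≤ k := Nat.lt_succ_iff.mp (mem_range.mp hi)
  have hx : x^i * x^(k-i) = x^k := by
    rw [← pow_add, show i+(k-i) = k from by omega]
  calc x^i * ((a.factorial : ℝ)/((a+i).factorial)) * (x^(k-i) * ((b.factorial : ℝ)/((b+(k-i)).factorial)))
      = (x^i * x^(k-i)) * (((a.factorial : ℝ)/((a+i).factorial)) * ((b.factorial : ℝ)/((b+(k-i)).factorial))) := by ring
    _ = x^k * (((a.factorial : ℝ)/((a+i).factorial)) * ((b.factorial : ℝ)/((b+(k-i)).factorial))) := by rw [hx]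

lemma summable_cauchy (a b : ℕ) (x : ℝ) :
    Summable (fun k : ℕ => x^k *
      ∑ i ∈ range (k+1), ((a.factorial : ℝ)/((a+i).factorial)) * ((b.factorial : ℝ)/((b+(k-i)).factorial))) := by
  have h := summable_sum_mul_range_of_summable_norm' (summable_norm_F a x) (summable_F a x)
      (summable_norm_F b x) (summable_F b x)
  apply h.congr
  intro k
  rw [Finset.mul_sum]
  apply Finset.sum_congr rfl
  intro i hi
  have hik : i ≤ k := Nat.lt_succ_iff.mp (mem_range.mp hi)
  have hx : x^i * x^(k-i) = x^k := by
    rw [← pow_add, show i+(k-i) = k from by omega]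
  calc x^i * ((a.factorial : ℝ)/((a+i).factorial)) * (x^(k-i) * ((b.factorial : ℝ)/((b+(k-i)).factorial)))
      = (x^i * x^(k-i)) * (((a.factorial : ℝ)/((a+i).factorial)) * ((b.factorial : ℝ)/((b+(k-i)).factorial))) := by ring
    _ = x^k * (((a.factorial : ℝ)/((a+i).factorial)) * ((b.factorial : ℝ)/((b+(k-i)).factorial))) := by rw [hx]

/-- the fundamental inequality: W(x) ≥ 0 -/
lemma W_nonneg (p : ℕ) (x : ℝ) (hx : 0 ≤ x) :
    0 ≤ ((p:ℝ)+1) * (F (p+2) x * F (p+3) x) + ((p:ℝ)+3) * (F (p+1) x * F (p+2) x)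
      - 2*((p:ℝ)+2) * (F (p+1) x * F (p+3) x) := by
  rw [F_mul (p+2) (p+3) x, F_mul (p+1) (p+2) x, F_mul (p+1) (p+3) x]
  rw [← tsum_mul_left, ← tsum_mul_left, ← tsum_mul_left]
  rw [← Summable.tsum_add ((summable_cauchy (p+2) (p+3) x).mul_left _) ((summable_cauchy (p+1) (p+2) x).mul_left _)]
  rw [← Summable.tsum_sub (((summable_cauchy (p+2) (p+3) x).mul_left _).add ((summable_cauchy (p+1) (p+2) x).mul_left _))
      ((summable_cauchy (p+1) (p+3) x).mul_left _)]
  apply tsum_nonneg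
  intro k
  have h : ((p:ℝ)+1) * (x^k * ∑ i ∈ range (k+1), (((p+2).factorial : ℝ)/((p+2+i).factorial)) * (((p+3).factorial : ℝ)/((p+3+(k-i)).factorial)))
      + ((p:ℝ)+3) * (x^k * ∑ i ∈ range (k+1), (((p+1).factorial : ℝ)/((p+1+i).factorial)) * (((p+2).factorial : ℝ)/((p+2+(k-i)).factorial)))
      - 2*((p:ℝ)+2) * (x^k * ∑ i ∈ range (k+1), (((p+1).factorial : ℝ)/((p+1+i).factorial)) * (((p+3).factorial : ℝ)/((p+3+(k-i)).factorial)))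
      = x^k * wk p k := by
    rw [wk]; ring
  rw [h]
  exact mul_nonneg (by positivity) (wk_nonneg p k)


/-! ### closed forms via exp -/

noncomputable def T (m : ℕ) (x : ℝ) : ℝ := ∑ i ∈ range m, x^i / (i.factorial : ℝ)

noncomputable def R (m : ℕ) (x : ℝ) : ℝ := Real.exp x - T m x

lemma hasDerivAt_T (m : ℕ) (x : ℝ) : HasDerivAt (fun y => T (m+1) y) (T m x) x := by
  induction m with
  | zero =>
    have : (fun y : ℝ => T 1 y) = fun _ => 1 := by
      funext y; simp [T]
    rw [this]
    simpa [T] using hasDerivAt_const x (1:ℝ)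
  | succ m ih =>
    have hfun : (fun y : ℝ => T (m+2) y) = fun y => T (m+1) y + y^(m+1) / ((m+1).factorial : ℝ) := by
      funext y
      rw [T, Finset.sum_range_succ]
      rfl
    rw [hfun]
    have hpow : HasDerivAt (fun y : ℝ => y^(m+1) / ((m+1).factorial : ℝ))
        (x^m / (m.factorial : ℝ)) x := by
      have h1 : HasDerivAt (fun y : ℝ => y^(m+1)) (((m:ℝ)+1) * x^m) x := by
        have := hasDerivAt_pow (m+1) x
        simpa using this
      have h2 := h1.div_const ((m+1).factorial : ℝ)
      have : ((m:ℝ)+1) * x^m / ((m+1).factorial : ℝ) = x^m / (m.factorial : ℝ) := by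
        rw [Nat.factorial_succ]
        push_cast
        rw [div_eq_div_iff (by positivity) (by positivity)]
        ring
      rwa [this] at h2
    have := ih.add hpow
    have hT : T m x + x^m / (m.factorial : ℝ) = T (m+1) x := by
      rw [T, T, Finset.sum_range_succ]
    rwa [hT] at this

lemma hasDerivAt_R (m : ℕ) (x : ℝ) : HasDerivAt (fun y => R (m+1) y) (R m x) x := by
  have h := (Real.hasDerivAt_exp x).sub (hasDerivAt_T m x)
  exact h

/-- the series-tail identity -/
lemma R_eq (m : ℕ) (x : ℝ) : (m.factorial : ℝ) * R m x = x^m * F m x := by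
  have hsum : Summable (fun k : ℕ => (m.factorial : ℝ) * (x^k / (k.factorial : ℝ))) :=
    (Real.summable_pow_div_factorial x).mul_left _
  have hsplit := Summable.sum_add_tsum_nat_add (f := fun k : ℕ => (m.factorial : ℝ) * (x^k / (k.factorial : ℝ))) m hsum
  have hexp : (m.factorial : ℝ) * Real.exp x = ∑' k : ℕ, (m.factorial : ℝ) * (x^k / (k.factorial : ℝ)) := by
    rw [exp_tsum, ← tsum_mul_left]
  have hT : (m.factorial : ℝ) * T m x = ∑ i ∈ range m, (m.factorial : ℝ) * (x^i / (i.factorial : ℝ)) := by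
    rw [T, Finset.mul_sum]
  have htail : ∑' k : ℕ, (m.factorial : ℝ) * (x^(k+m) / ((k+m).factorial : ℝ)) = x^m * F m x := by
    rw [F, ← tsum_mul_left]
    apply tsum_congr
    intro k
    rw [show k+m = m+k from by ring, pow_add]
    field_simp
  rw [R, mul_sub, hexp, hT, ← hsplit]
  rw [← htail]
  ring

lemma R_pos (m : ℕ) (x : ℝ) (hx : 0 < x) : 0 < R m x := by
  have h := R_eq m x
  have hF := F_pos m x hx.le
  have hfac : (0:ℝ) < (m.factorial : ℝ) := by positivity
  nlinarith [pow_pos hx m]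

/-- pure algebra: the three-term identity -/
lemma alg (x aa bb cc dd pp : ℝ)
    (h1 : (pp+1)*aa = (pp+1) + x*bb) (h2 : (pp+2)*bb = (pp+2) + x*cc)
    (h3 : (pp+3)*cc = (pp+3) + x*dd) :
    (pp+1)*aa*cc*dd + (pp+3)*bb*cc^2 - 2*(pp+2)*bb^2*dd
      = (pp+1)*cc*dd + (pp+3)*bb*cc - 2*(pp+2)*bb*dd := by
  linear_combination (cc*dd)*h1 - 2*(bb*dd)*h2 + (bb*cc)*h3


/-! ### final assembly -/

noncomputable def gF (p : ℕ) : ℝ → ℝ := fun x => F (p+1) x * F (p+3) x / (F (p+2) x)^2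

noncomputable def Cst (p : ℕ) : ℝ :=
  ((p+1).factorial : ℝ) * ((p+3).factorial : ℝ) / (((p+2).factorial : ℝ))^2

noncomputable def GR (p : ℕ) : ℝ → ℝ := fun x => Cst p * (R (p+1) x * R (p+3) x / (R (p+2) x)^2)

lemma F_eq_R (m : ℕ) (x : ℝ) (hx : x ≠ 0) :
    F m x = ((m.factorial : ℝ)) * R m x / x^m := by
  rw [eq_div_iff (by positivity)]
  have := R_eq m x
  linarith

lemma gF_eq_GR (p : ℕ) (x : ℝ) (hx : 0 < x) : gF p x = GR p x := by
  have hxne : x ≠ 0 := ne_of_gt hx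
  rw [gF, GR, Cst, F_eq_R (p+1) x hxne, F_eq_R (p+2) x hxne, F_eq_R (p+3) x hxne]
  have hR2 : R (p+2) x ≠ 0 := ne_of_gt (R_pos _ x hx)
  have q1 : ((p+1).factorial : ℝ) ≠ 0 := by positivity
  have q2 : ((p+2).factorial : ℝ) ≠ 0 := by positivity
  have q3 : ((p+3).factorial : ℝ) ≠ 0 := by positivity
  have hp : x^(p+1) * x^(p+3) = (x^(p+2))^2 := by
    rw [← pow_add, ← pow_mul]
    congr 1
    ring
  field_simp
  ring

lemma Nval_nonneg (p : ℕ) (a : ℝ) (ha : 0 < a) :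
    0 ≤ R p a * R (p+3) a * R (p+2) a + R (p+1) a * (R (p+2) a)^2
      - 2 * (R (p+1) a)^2 * R (p+3) a := by
  have hxne : a ≠ 0 := ne_of_gt ha
  have e0 : R p a = (a^p * F p a) / (p.factorial : ℝ) := by
    rw [eq_div_iff (by positivity : (p.factorial:ℝ) ≠ 0)]
    linarith [R_eq p a]
  have e1 : R (p+1) a = (a^(p+1) * F (p+1) a) / ((p+1).factorial : ℝ) := by
    rw [eq_div_iff (by positivity : ((p+1).factorial:ℝ) ≠ 0)]
    linarith [R_eq (p+1) a]
  have e2 : R (p+2) a = (a^(p+2) * F (p+2) a) / ((p+2).factorial : ℝ) := by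
    rw [eq_div_iff (by positivity : ((p+2).factorial:ℝ) ≠ 0)]
    linarith [R_eq (p+2) a]
  have e3 : R (p+3) a = (a^(p+3) * F (p+3) a) / ((p+3).factorial : ℝ) := by
    rw [eq_div_iff (by positivity : ((p+3).factorial:ℝ) ≠ 0)]
    linarith [R_eq (p+3) a]
  have hB3 : ((p:ℝ)+1) * F p a * F (p+2) a * F (p+3) a + ((p:ℝ)+3) * F (p+1) a * (F (p+2) a)^2
      - 2*((p:ℝ)+2) * (F (p+1) a)^2 * F (p+3) a
      = ((p:ℝ)+1) * F (p+2) a * F (p+3) a + ((p:ℝ)+3) * F (p+1) a * F (p+2) a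
        - 2*((p:ℝ)+2) * F (p+1) a * F (p+3) a := by
    have h1 := F_rec p a
    have h2 := F_rec (p+1) a
    have h3 := F_rec (p+2) a
    push_cast at h1 h2 h3
    linear_combination (F (p+2) a * F (p+3) a) * h1 - 2*(F (p+1) a * F (p+3) a) * h2
      + (F (p+1) a * F (p+2) a) * h3
  have hW := W_nonneg p a ha.le
  have hB3pos : 0 ≤ ((p:ℝ)+1) * F p a * F (p+2) a * F (p+3) a + ((p:ℝ)+3) * F (p+1) a * (F (p+2) a)^2
      - 2*((p:ℝ)+2) * (F (p+1) a)^2 * F (p+3) a := by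
    rw [hB3]
    linarith [hW]
  -- now rewrite the R-expression
  rw [e0, e1, e2, e3]
  have fe1 : ((p+1).factorial : ℝ) = ((p:ℝ)+1) * (p.factorial : ℝ) := by
    rw [Nat.factorial_succ]; push_cast; ring
  have fe2 : ((p+2).factorial : ℝ) = ((p:ℝ)+2) * ((p:ℝ)+1) * (p.factorial : ℝ) := by
    rw [show p+2 = (p+1)+1 from by ring, Nat.factorial_succ]
    push_cast
    rw [fe1]
    push_cast
    ring
  have fe3 : ((p+3).factorial : ℝ) = ((p:ℝ)+3) * ((p:ℝ)+2) * ((p:ℝ)+1) * (p.factorial : ℝ) := by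
    rw [show p+3 = (p+2)+1 from by ring, Nat.factorial_succ]
    push_cast
    rw [fe2]
    push_cast
    ring
  rw [fe1, fe2, fe3]
  have hq : (0:ℝ) < (p.factorial : ℝ) := by positivity
  have hpw : (0:ℝ) < a^(3*p+5) := pow_pos ha _
  have key : (a^p * F p a) / (((p:ℝ)+1) * (p.factorial : ℝ)) * 1 = (a^p * F p a) / (((p:ℝ)+1) * (p.factorial : ℝ)) := by ring
  have expand : (a^p * F p a) / (p.factorial : ℝ) * ((a^(p+3) * F (p+3) a) / (((p:ℝ)+3) * ((p:ℝ)+2) * ((p:ℝ)+1) * (p.factorial : ℝ)))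
        * ((a^(p+2) * F (p+2) a) / (((p:ℝ)+2) * ((p:ℝ)+1) * (p.factorial : ℝ)))
      + (a^(p+1) * F (p+1) a) / (((p:ℝ)+1) * (p.factorial : ℝ))
        * ((a^(p+2) * F (p+2) a) / (((p:ℝ)+2) * ((p:ℝ)+1) * (p.factorial : ℝ)))^2
      - 2 * ((a^(p+1) * F (p+1) a) / (((p:ℝ)+1) * (p.factorial : ℝ)))^2
        * ((a^(p+3) * F (p+3) a) / (((p:ℝ)+3) * ((p:ℝ)+2) * ((p:ℝ)+1) * (p.factorial : ℝ)))
      = a^(3*p+5) / ((((p:ℝ)+1)*((p:ℝ)+2)*((p:ℝ)+3)) * (((p:ℝ)+1)*((p:ℝ)+2)*((p:ℝ)+1)) * (p.factorial:ℝ)^3)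
        * ( ((p:ℝ)+1) * F p a * F (p+2) a * F (p+3) a + ((p:ℝ)+3) * F (p+1) a * (F (p+2) a)^2
          - 2*((p:ℝ)+2) * (F (p+1) a)^2 * F (p+3) a ) := by
    have d1 : ((p:ℝ)+1) ≠ 0 := by positivity
    have d2 : ((p:ℝ)+2) ≠ 0 := by positivity
    have d3 : ((p:ℝ)+3) ≠ 0 := by positivity
    have d4 : (p.factorial : ℝ) ≠ 0 := by positivity
    field_simp
    ring
  rw [expand]
  apply mul_nonneg _ hB3pos
  positivity

lemma hasDerivAt_gF (p : ℕ) (a : ℝ) (ha : 0 < a) :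
    ∃ d, HasDerivAt (gF p) d a ∧ 0 ≤ d := by
  have hu : HasDerivAt (fun y => R (p+1) y) (R p a) a := hasDerivAt_R p a
  have hv : HasDerivAt (fun y => R (p+2) y) (R (p+1) a) a := hasDerivAt_R (p+1) a
  have hw : HasDerivAt (fun y => R (p+3) y) (R (p+2) a) a := hasDerivAt_R (p+2) a
  have hnum : HasDerivAt (fun y => R (p+1) y * R (p+3) y)
      (R p a * R (p+3) a + R (p+1) a * R (p+2) a) a := hu.mul hw
  have hden : HasDerivAt (fun y => (R (p+2) y)^2) (2 * R (p+2) a ^ 1 * R (p+1) a) a := by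
    simpa using hv.fun_pow 2
  have hv2 : (R (p+2) a)^2 ≠ 0 := by
    have := R_pos (p+2) a ha
    positivity
  have hq := hnum.div hden hv2
  have hGR : HasDerivAt (GR p)
      (Cst p * (((R p a * R (p+3) a + R (p+1) a * R (p+2) a) * (R (p+2) a)^2
        - R (p+1) a * R (p+3) a * (2 * R (p+2) a ^ 1 * R (p+1) a)) / ((R (p+2) a)^2)^2)) a :=
    hq.const_mul (Cst p)
  have heq : gF p =ᶠ[nhds a] GR p := by
    filter_upwards [Ioi_mem_nhds ha] with y hy
    exact gF_eq_GR p y hy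
  have hg : HasDerivAt (gF p)
      (Cst p * (((R p a * R (p+3) a + R (p+1) a * R (p+2) a) * (R (p+2) a)^2
        - R (p+1) a * R (p+3) a * (2 * R (p+2) a ^ 1 * R (p+1) a)) / ((R (p+2) a)^2)^2)) a :=
    hGR.congr_of_eventuallyEq heq
  refine ⟨_, hg, ?_⟩
  have hfac : ((R p a * R (p+3) a + R (p+1) a * R (p+2) a) * (R (p+2) a)^2
        - R (p+1) a * R (p+3) a * (2 * R (p+2) a ^ 1 * R (p+1) a))
      = R (p+2) a * (R p a * R (p+3) a * R (p+2) a + R (p+1) a * (R (p+2) a)^2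
        - 2 * (R (p+1) a)^2 * R (p+3) a) := by ring
  rw [hfac]
  have hN := Nval_nonneg p a ha
  have hv0 := R_pos (p+2) a ha
  have hCst : 0 ≤ Cst p := by rw [Cst]; positivity
  apply mul_nonneg hCst
  apply div_nonneg (mul_nonneg hv0.le hN)
  positivity

lemma tendstoF (p m : ℕ) : Filter.Tendsto (F m) (nhdsWithin 0 (Set.Ici (0:ℝ))) (nhds 1) := by
  have hup : Filter.Tendsto (fun x : ℝ => Real.exp x) (nhdsWithin 0 (Set.Ici (0:ℝ))) (nhds 1) := by
    have h := (Real.continuous_exp.tendsto 0).mono_left (nhdsWithin_le_nhds (s := Set.Ici (0:ℝ)))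
    simpa using h
  apply tendsto_of_tendsto_of_tendsto_of_le_of_le' tendsto_const_nhds hup
  · filter_upwards [self_mem_nhdsWithin] with y hy
    exact one_le_F m y hy
  · filter_upwards [self_mem_nhdsWithin] with y hy
    exact F_le_exp m y hy

lemma contOn_gF (p : ℕ) : ContinuousOn (gF p) (Set.Ici (0:ℝ)) := by
  intro x hx
  rcases eq_or_lt_of_le (Set.mem_Ici.mp hx) with h0 | hpos
  · subst h0
    unfold ContinuousWithinAt
    have hval : gF p 0 = 1 := by
      rw [gF]
      simp only [F_at_zero]
      norm_num
    rw [hval]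
    have ht := ((tendstoF p (p+1)).mul (tendstoF p (p+3))).div ((tendstoF p (p+2)).pow 2) (by norm_num)
    simpa [show gF p = fun x => F (p+1) x * F (p+3) x / (F (p+2) x)^2 from rfl, Pi.div_def] using ht
  · obtain ⟨d, hd, _⟩ := hasDerivAt_gF p x hpos
    exact hd.differentiableAt.continuousAt.continuousWithinAt

end S13

theorem statement_13 (n : ℕ) (hn : 1 ≤ n) :
    MonotoneOn
      (fun x : ℝ =>
        kummer 1 (n + 1) x * kummer 1 (n + 3) x / (kummer 1 (n + 2) x) ^ 2)
      (Set.Ici (0 : ℝ)) := by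
  obtain ⟨p, rfl⟩ : ∃ p, n = p+1 := ⟨n-1, by omega⟩
  have hfun : (fun x : ℝ =>
        kummer 1 (↑(p+1) + 1) x * kummer 1 (↑(p+1) + 3) x / (kummer 1 (↑(p+1) + 2) x) ^ 2)
      = S13.gF p := by
    funext x
    have k2 : ((p+1 : ℕ) : ℝ) + 3 = ((p+3 : ℕ) : ℝ) + 1 := by push_cast; ring
    have k3 : ((p+1 : ℕ) : ℝ) + 2 = ((p+2 : ℕ) : ℝ) + 1 := by push_cast; ring
    rw [k2, k3, S13.kummer_eq_F, S13.kummer_eq_F, S13.kummer_eq_F]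
    rfl
  rw [hfun]
  apply monotoneOn_of_deriv_nonneg (convex_Ici 0) (S13.contOn_gF p)
  · rw [interior_Ici]
    intro x hx
    obtain ⟨d, hd, _⟩ := S13.hasDerivAt_gF p x hx
    exact hd.differentiableAt.differentiableWithinAt
  · rw [interior_Ici]
    intro x hx
    obtain ⟨d, hd, hd0⟩ := S13.hasDerivAt_gF p x hx
    rw [hd.deriv]
    exact hd0
end

section
/- Let a, b, c be real numbers with a > 0 and b > c > 0. Then for all x ≥ 0 the Turán type inequality [₁F₁(a; b; x)]² ≤ ₁F₁(a; b−c; x)·₁F₁(a; b+c; x) holds. -/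
lemma ascPoch_pos {a : ℝ} (ha : 0 < a) (n : ℕ) : 0 < ascPoch a n :=
  Finset.prod_pos fun k _ => by positivity

lemma ascPoch_succ (a : ℝ) (n : ℕ) : ascPoch a (n + 1) = ascPoch a n * (a + n) :=
  Finset.prod_range_succ _ _

lemma ascPoch_mul_le {b c : ℝ} (hbc : b > c) (hc : 0 < c) (n : ℕ) :
    ascPoch (b - c) n * ascPoch (b + c) n ≤ (ascPoch b n) ^ 2 := by
  rw [ascPoch, ascPoch, ascPoch, ← Finset.prod_mul_distrib, ← Finset.prod_pow]
  refine Finset.prod_le_prod (fun k _ => ?_) fun k _ => ?_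
  · have hk : (0:ℝ) ≤ k := Nat.cast_nonneg k
    nlinarith
  · nlinarith [sq_nonneg c]

lemma kterm_nonneg {a β x : ℝ} (ha : 0 < a) (hβ : 0 < β) (hx : 0 ≤ x) (n : ℕ) :
    0 ≤ ascPoch a n / (ascPoch β n * n.factorial) * x ^ n := by
  have hA := (ascPoch_pos ha n).le
  have hB := (ascPoch_pos hβ n).le
  have hf : (0:ℝ) ≤ n.factorial := Nat.cast_nonneg _
  exact mul_nonneg (div_nonneg hA (mul_nonneg hB hf)) (pow_nonneg hx n)

lemma kummer_term_summable {a β x : ℝ} (ha : 0 < a) (hβ : 0 < β) (hx : 0 ≤ x) :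
    Summable (fun n : ℕ => ascPoch a n / (ascPoch β n * n.factorial) * x ^ n) := by
  apply summable_of_ratio_norm_eventually_le (r := 1/2) (by norm_num)
  filter_upwards [Filter.eventually_ge_atTop ⌈max a (4*x)⌉₊] with n hn
  have hn' : max a (4*x) ≤ n := le_trans (Nat.le_ceil _) (by exact_mod_cast hn)
  have h1 : a ≤ n := le_trans (le_max_left _ _) hn'
  have h2 : 4*x ≤ n := le_trans (le_max_right _ _) hn'
  have hA := ascPoch_pos ha n
  have hB := ascPoch_pos hβ n
  have hf : (0:ℝ) < n.factorial := by exact_mod_cast n.factorial_pos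
  have hn0 : (0:ℝ) ≤ n := Nat.cast_nonneg n
  rw [Real.norm_eq_abs, Real.norm_eq_abs, abs_of_nonneg (kterm_nonneg ha hβ hx _),
    abs_of_nonneg (kterm_nonneg ha hβ hx _)]
  have heq : ascPoch a (n+1) / (ascPoch β (n+1) * (n+1).factorial) * x ^ (n+1)
      = (ascPoch a n / (ascPoch β n * n.factorial) * x ^ n) *
        ((a + n) * x / ((β + n) * (n + 1))) := by
    rw [ascPoch_succ, ascPoch_succ, Nat.factorial_succ, pow_succ]
    have hβn : (0:ℝ) < β + n := by linarith
    have han : (0:ℝ) < (n:ℝ) + 1 := by linarith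
    push_cast
    field_simp
  rw [heq]
  rw [mul_comm (1/2 : ℝ)]
  refine mul_le_mul_of_nonneg_left ?_ (kterm_nonneg ha hβ hx n)
  rw [div_le_iff₀ (by nlinarith)]
  have han : a + (n:ℝ) ≤ 2 * n := by linarith
  nlinarith [mul_nonneg hx hn0, hβ.le, mul_nonneg hx (show (0:ℝ) ≤ a + n by linarith)]


lemma tsum_cauchy_schwarz {u v w : ℕ → ℝ} (hu : ∀ n, 0 ≤ u n) (hv : ∀ n, 0 ≤ v n)
    (hw : ∀ n, 0 ≤ w n) (h : ∀ n, u n ^ 2 ≤ v n * w n)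
    (hvs : Summable v) (hws : Summable w) :
    (∑' n, u n) ^ 2 ≤ (∑' n, v n) * (∑' n, w n) := by
  have hule : ∀ n, u n ≤ Real.sqrt (v n) * Real.sqrt (w n) := by
    intro n
    rw [← Real.sqrt_mul (hv n)]
    exact (Real.le_sqrt (hu n) (mul_nonneg (hv n) (hw n))).mpr (h n)
  have hus : Summable u := by
    refine Summable.of_nonneg_of_le hu (fun n => ?_) (hvs.add hws)
    nlinarith [hu n, hv n, hw n, h n, sq_nonneg (v n - w n), sq_nonneg (u n - v n - w n)]
  have hV : 0 ≤ ∑' n, v n := tsum_nonneg hv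
  have hW : 0 ≤ ∑' n, w n := tsum_nonneg hw
  have hmain : ∑' n, u n ≤ Real.sqrt (∑' n, v n) * Real.sqrt (∑' n, w n) := by
    refine Summable.tsum_le_of_sum_le hus fun s => ?_
    calc ∑ n ∈ s, u n ≤ ∑ n ∈ s, Real.sqrt (v n) * Real.sqrt (w n) :=
          Finset.sum_le_sum fun n _ => hule n
      _ ≤ Real.sqrt (∑ n ∈ s, Real.sqrt (v n) ^ 2) * Real.sqrt (∑ n ∈ s, Real.sqrt (w n) ^ 2) :=
          Real.sum_mul_le_sqrt_mul_sqrt s _ _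
      _ ≤ Real.sqrt (∑' n, v n) * Real.sqrt (∑' n, w n) := by
          refine mul_le_mul (Real.sqrt_le_sqrt ?_) (Real.sqrt_le_sqrt ?_)
            (Real.sqrt_nonneg _) (Real.sqrt_nonneg _)
          · simp_rw [Real.sq_sqrt (hv _)]; exact Summable.sum_le_tsum s (fun n _ => hv n) hvs
          · simp_rw [Real.sq_sqrt (hw _)]; exact Summable.sum_le_tsum s (fun n _ => hw n) hws
  calc (∑' n, u n) ^ 2 ≤ (Real.sqrt (∑' n, v n) * Real.sqrt (∑' n, w n)) ^ 2 :=
        pow_le_pow_left₀ (tsum_nonneg hu) hmain 2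
    _ = (∑' n, v n) * (∑' n, w n) := by
        rw [mul_pow, Real.sq_sqrt hV, Real.sq_sqrt hW]

theorem statement_15 (a b c : ℝ) (ha : 0 < a) (hbc : b > c) (hc : 0 < c)
    (x : ℝ) (hx : 0 ≤ x) :
    (kummer a b x) ^ 2 ≤ kummer a (b - c) x * kummer a (b + c) x := by
  have hb : 0 < b := hc.trans hbc
  have hbm : 0 < b - c := by linarith
  have hbp : 0 < b + c := by linarith
  unfold kummer
  refine tsum_cauchy_schwarz (kterm_nonneg ha hb hx) (kterm_nonneg ha hbm hx)
    (kterm_nonneg ha hbp hx) (fun n => ?_)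
    (kummer_term_summable ha hbm hx) (kummer_term_summable ha hbp hx)
  have hA := ascPoch_pos ha n
  have hB := ascPoch_pos hb n
  have hBm := ascPoch_pos hbm n
  have hBp := ascPoch_pos hbp n
  have hf : (0:ℝ) < n.factorial := by exact_mod_cast n.factorial_pos
  have key := ascPoch_mul_le hbc hc n
  have hxn : (0:ℝ) ≤ x ^ n := pow_nonneg hx n
  have e1 : (ascPoch a n / (ascPoch b n * n.factorial) * x ^ n) ^ 2
      = (ascPoch a n * x ^ n) ^ 2 / ((ascPoch b n * n.factorial) ^ 2) := by ring
  have e2 : (ascPoch a n / (ascPoch (b-c) n * n.factorial) * x ^ n) *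
      (ascPoch a n / (ascPoch (b+c) n * n.factorial) * x ^ n)
      = (ascPoch a n * x ^ n) ^ 2 /
        ((ascPoch (b-c) n * ascPoch (b+c) n) * ((n.factorial:ℝ) * n.factorial)) := by ring
  rw [e1, e2, div_le_div_iff₀ (by positivity) (by positivity)]
  nlinarith [sq_nonneg (ascPoch a n * x ^ n), mul_pos hf hf,
    mul_le_mul_of_nonneg_left key (mul_nonneg (mul_nonneg (sq_nonneg (ascPoch a n * x ^ n)) hf.le) hf.le)]
end

section
/- Let r ≥ 1 and let a = (a_1,…,a_{r+1}), b = (b_1,…,b_r), c = (c_1,…,c_r) be real parameters with a_j > 0 for all j and b_i > c_i > 0 for i = 1,…,r. Then for all x with 0 ≤ x < 1 the Turán type inequality [₍r+1₎F_r(a_1,…,a_{r+1}; b_1,…,b_r; x)]² ≤ ₍r+1₎F_r(a_1,…,a_{r+1}; b_1−c_1,…,b_r−c_r; x)·₍r+1₎F_r(a_1,…,a_{r+1}; b_1+c_1,…,b_r+c_r; x) holds. -/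
/-- The generalized hypergeometric function with `r+1` upper and `r` lower parameters. -/
noncomputable def genHyp (r : ℕ) (a : Fin (r + 1) → ℝ) (b : Fin r → ℝ) (x : ℝ) : ℝ :=
  ∑' n : ℕ, (∏ j, ascPoch (a j) n) / ((∏ j, ascPoch (b j) n) * n.factorial) * x ^ n

/-- the general term of the hypergeometric series -/
noncomputable def hypTerm (r : ℕ) (a : Fin (r + 1) → ℝ) (b : Fin r → ℝ) (x : ℝ) (n : ℕ) : ℝ :=
  (∏ j, ascPoch (a j) n) / ((∏ j, ascPoch (b j) n) * n.factorial) * x ^ n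

lemma genHyp_eq (r : ℕ) (a : Fin (r + 1) → ℝ) (b : Fin r → ℝ) (x : ℝ) :
    genHyp r a b x = ∑' n, hypTerm r a b x n := rfl

lemma hypTerm_nonneg (r : ℕ) (a : Fin (r + 1) → ℝ) (b : Fin r → ℝ) {x : ℝ}
    (ha : ∀ j, 0 < a j) (hb : ∀ j, 0 < b j) (hx0 : 0 ≤ x) (n : ℕ) :
    0 ≤ hypTerm r a b x n := by
  unfold hypTerm
  have h1 : 0 < ∏ j, ascPoch (a j) n := Finset.prod_pos fun j _ => ascPoch_pos (ha j) n
  have h2 : 0 < ∏ j, ascPoch (b j) n := Finset.prod_pos fun j _ => ascPoch_pos (hb j) n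
  have h3 : (0:ℝ) < n.factorial := by exact_mod_cast n.factorial_pos
  positivity

lemma tendsto_aux (a b : ℝ) :
    Filter.Tendsto (fun n : ℕ => (a + n) / (b + n)) Filter.atTop (nhds 1) := by
  have h1 : Filter.Tendsto (fun n : ℕ => b + (n:ℝ)) Filter.atTop Filter.atTop :=
    Filter.tendsto_atTop_add_const_left _ b tendsto_natCast_atTop_atTop
  have h2 : Filter.Tendsto (fun n : ℕ => 1 + (a - b) / (b + n)) Filter.atTop (nhds 1) := by
    have := (tendsto_const_nhds (x := a - b) (f := Filter.atTop (α := ℕ))).div_atTop h1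
    simpa using tendsto_const_nhds.add this
  refine h2.congr' ?_
  filter_upwards [h1.eventually_gt_atTop 0] with n hn
  field_simp
  ring

lemma hypTerm_succ (r : ℕ) (a : Fin (r + 1) → ℝ) (b : Fin r → ℝ) (x : ℝ)
    (ha : ∀ j, 0 < a j) (hb : ∀ j, 0 < b j) (n : ℕ) :
    hypTerm r a b x (n + 1) =
      (∏ j, (a j + n)) * x / ((∏ j, (b j + n)) * (n + 1)) * hypTerm r a b x n := by
  have hPn : (0:ℝ) < ∏ j, ascPoch (a j) n := Finset.prod_pos fun j _ => ascPoch_pos (ha j) n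
  have hQn : (0:ℝ) < ∏ j, ascPoch (b j) n := Finset.prod_pos fun j _ => ascPoch_pos (hb j) n
  have hBn : (0:ℝ) < ∏ j, (b j + n) := Finset.prod_pos fun j _ => by
    have := hb j; positivity
  have hfn : (0:ℝ) < n.factorial := by exact_mod_cast n.factorial_pos
  have hn1 : (0:ℝ) < (n:ℝ) + 1 := by positivity
  unfold hypTerm
  simp only [ascPoch_succ, Finset.prod_mul_distrib, Nat.factorial_succ, Nat.cast_mul,
    Nat.cast_add, Nat.cast_one, pow_succ]
  field_simp

lemma ratio_tendsto (r : ℕ) (a : Fin (r + 1) → ℝ) (b : Fin r → ℝ) (x : ℝ)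
    (ha : ∀ j, 0 < a j) (hb : ∀ j, 0 < b j) :
    Filter.Tendsto (fun n : ℕ => (∏ j, (a j + n)) * x / ((∏ j, (b j + n)) * (n + 1)))
      Filter.atTop (nhds x) := by
  have key : ∀ n : ℕ, (∏ j, (a j + n)) * x / ((∏ j, (b j + n)) * (n + 1)) =
      x * ((∏ j : Fin r, (a j.castSucc + n) / (b j + n)) * ((a (Fin.last r) + n) / (n + 1))) := by
    intro n
    have hBn : (0:ℝ) < ∏ j, (b j + n) := Finset.prod_pos fun j _ => by
      have := hb j; positivity
    have hbj : ∀ j, (b j + (n:ℝ)) ≠ 0 := fun j => by have := hb j; positivity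
    have hn1 : ((n:ℝ) + 1) ≠ 0 := by positivity
    rw [Finset.prod_div_distrib, Fin.prod_univ_castSucc (f := fun j => a j + (n:ℝ))]
    field_simp
  simp only [key]
  have h1 : Filter.Tendsto (fun n : ℕ => ∏ j : Fin r, (a j.castSucc + n) / (b j + n))
      Filter.atTop (nhds 1) := by
    have := tendsto_finset_prod (Finset.univ : Finset (Fin r))
      (f := fun j (n : ℕ) => (a j.castSucc + n) / (b j + n)) (x := Filter.atTop)
      (fun j _ => tendsto_aux (a j.castSucc) (b j))
    simpa using this
  have h2 : Filter.Tendsto (fun n : ℕ => (a (Fin.last r) + n) / ((n:ℝ) + 1)) Filter.atTop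
      (nhds 1) := by
    have := tendsto_aux (a (Fin.last r)) 1
    simpa [add_comm] using this
  have := tendsto_const_nhds (x := x) (f := Filter.atTop (α := ℕ)) |>.mul (h1.mul h2)
  simpa using this

lemma hypTerm_summable (r : ℕ) (a : Fin (r + 1) → ℝ) (b : Fin r → ℝ) {x : ℝ}
    (ha : ∀ j, 0 < a j) (hb : ∀ j, 0 < b j) (hx0 : 0 ≤ x) (hx1 : x < 1) :
    Summable (hypTerm r a b x) := by
  set l : ℝ := (x + 1) / 2 with hl
  have hxl : x < l := by rw [hl]; linarith
  have hl1 : l < 1 := by rw [hl]; linarith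
  apply summable_of_ratio_norm_eventually_le hl1
  filter_upwards [(ratio_tendsto r a b x ha hb).eventually_le_const hxl] with n hn
  have hnn := hypTerm_nonneg r a b ha hb hx0 n
  have hnn1 := hypTerm_nonneg r a b ha hb hx0 (n + 1)
  rw [Real.norm_of_nonneg hnn1, Real.norm_of_nonneg hnn, hypTerm_succ r a b x ha hb n]
  have hR : 0 ≤ (∏ j, (a j + n)) * x / ((∏ j, (b j + n)) * (n + 1)) := by
    have hA : (0:ℝ) ≤ ∏ j, (a j + (n:ℝ)) := Finset.prod_nonneg fun j _ => by
      have := ha j; positivity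
    have hB : (0:ℝ) ≤ ∏ j, (b j + (n:ℝ)) := Finset.prod_nonneg fun j _ => by
      have := hb j; positivity
    positivity
  exact mul_le_mul_of_nonneg_right hn hnn

lemma hypTerm_sq_le (r : ℕ) (a : Fin (r + 1) → ℝ) (b c : Fin r → ℝ) {x : ℝ}
    (ha : ∀ j, 0 < a j) (hbc : ∀ i, b i > c i) (hc : ∀ i, 0 < c i) (hx0 : 0 ≤ x) (n : ℕ) :
    hypTerm r a b x n ^ 2 ≤
      hypTerm r a (fun i => b i - c i) x n * hypTerm r a (fun i => b i + c i) x n := by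
  have hb : ∀ i, 0 < b i := fun i => (hc i).trans (hbc i)
  have hbm : ∀ i, 0 < b i - c i := fun i => sub_pos.mpr (hbc i)
  have hbp : ∀ i, 0 < b i + c i := fun i => by have := hb i; have := hc i; positivity
  -- key: (b-c)_n (b+c)_n ≤ ((b)_n)^2, factorwise
  have key : ∀ i, ascPoch (b i - c i) n * ascPoch (b i + c i) n ≤ ascPoch (b i) n ^ 2 := by
    intro i
    unfold ascPoch
    rw [← Finset.prod_mul_distrib, ← Finset.prod_pow]
    apply Finset.prod_le_prod
    · intro k _
      have h1 : 0 < b i - c i + k := by have := hbm i; positivity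
      have h2 : 0 < b i + c i + k := by have := hbp i; positivity
      positivity
    · intro k _
      have := sq_nonneg (c i)
      nlinarith
  have hQm : (0:ℝ) < ∏ j, ascPoch (b j - c j) n :=
    Finset.prod_pos fun j _ => ascPoch_pos (hbm j) n
  have hQp : (0:ℝ) < ∏ j, ascPoch (b j + c j) n :=
    Finset.prod_pos fun j _ => ascPoch_pos (hbp j) n
  have hQb : (0:ℝ) < ∏ j, ascPoch (b j) n :=
    Finset.prod_pos fun j _ => ascPoch_pos (hb j) n
  have hP : (0:ℝ) < ∏ j, ascPoch (a j) n := Finset.prod_pos fun j _ => ascPoch_pos (ha j) n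
  have hfn : (0:ℝ) < n.factorial := by exact_mod_cast n.factorial_pos
  have hQQ : (∏ j, ascPoch (b j - c j) n) * (∏ j, ascPoch (b j + c j) n) ≤
      (∏ j, ascPoch (b j) n) ^ 2 := by
    rw [← Finset.prod_mul_distrib, ← Finset.prod_pow]
    exact Finset.prod_le_prod (fun j _ => by
      have := (ascPoch_pos (hbm j) n).le; have := (ascPoch_pos (hbp j) n).le; positivity)
      (fun j _ => key j)
  have lhs_eq : hypTerm r a b x n ^ 2 =
      ((∏ j, ascPoch (a j) n) ^ 2 * (x ^ n) ^ 2) /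
        (((∏ j, ascPoch (b j) n) * n.factorial) ^ 2) := by
    simp only [hypTerm]; ring
  have rhs_eq : hypTerm r a (fun i => b i - c i) x n * hypTerm r a (fun i => b i + c i) x n =
      ((∏ j, ascPoch (a j) n) ^ 2 * (x ^ n) ^ 2) /
        (((∏ j, ascPoch (b j - c j) n) * n.factorial) *
          ((∏ j, ascPoch (b j + c j) n) * n.factorial)) := by
    simp only [hypTerm]; ring
  rw [lhs_eq, rhs_eq]
  apply div_le_div_of_nonneg_left (by positivity) (by positivity)
  nlinarith [hQQ, sq_nonneg ((n.factorial : ℝ)), hfn, hQm.le, hQp.le]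

theorem statement_17 (r : ℕ) (hr : 1 ≤ r) (a : Fin (r + 1) → ℝ) (b c : Fin r → ℝ)
    (ha : ∀ j, 0 < a j) (hbc : ∀ i, b i > c i) (hc : ∀ i, 0 < c i)
    (x : ℝ) (hx0 : 0 ≤ x) (hx1 : x < 1) :
    (genHyp r a b x) ^ 2 ≤
      genHyp r a (fun i => b i - c i) x * genHyp r a (fun i => b i + c i) x := by
  have hb : ∀ i, 0 < b i := fun i => (hc i).trans (hbc i)
  have hbm : ∀ i, 0 < b i - c i := fun i => sub_pos.mpr (hbc i)
  have hbp : ∀ i, 0 < b i + c i := fun i => by have := hb i; have := hc i; positivity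
  set tb := hypTerm r a b x
  set tm := hypTerm r a (fun i => b i - c i) x
  set tp := hypTerm r a (fun i => b i + c i) x
  have hsm : Summable tm := hypTerm_summable r a _ ha hbm hx0 hx1
  have hsp : Summable tp := hypTerm_summable r a _ ha hbp hx0 hx1
  have hsb : Summable tb := hypTerm_summable r a _ ha hb hx0 hx1
  have hnm : ∀ n, 0 ≤ tm n := hypTerm_nonneg r a _ ha hbm hx0
  have hnp : ∀ n, 0 ≤ tp n := hypTerm_nonneg r a _ ha hbp hx0
  have hnb : ∀ n, 0 ≤ tb n := hypTerm_nonneg r a _ ha hb hx0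
  have hsq : ∀ n, tb n ^ 2 ≤ tm n * tp n := hypTerm_sq_le r a b c ha hbc hc hx0
  -- partial sums bound
  have partial_bound : ∀ N : ℕ,
      (∑ n ∈ Finset.range N, tb n) ^ 2 ≤ (∑' n, tm n) * ∑' n, tp n := by
    intro N
    have step : ∀ n ∈ Finset.range N, tb n ≤ Real.sqrt (tm n * tp n) := by
      intro n _
      exact Real.le_sqrt_of_sq_le (hsq n)
    have h1 : (∑ n ∈ Finset.range N, tb n) ^ 2 ≤
        (∑ n ∈ Finset.range N, Real.sqrt (tm n * tp n)) ^ 2 := by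
      apply pow_le_pow_left₀ (Finset.sum_nonneg fun n _ => hnb n)
      exact Finset.sum_le_sum step
    have h2 : (∑ n ∈ Finset.range N, Real.sqrt (tm n * tp n)) ^ 2 ≤
        (∑ n ∈ Finset.range N, tm n) * ∑ n ∈ Finset.range N, tp n :=
      Finset.sum_sq_le_sum_mul_sum_of_sq_eq_mul _ (fun n _ => hnm n) (fun n _ => hnp n)
        (fun n _ => Real.sq_sqrt (mul_nonneg (hnm n) (hnp n)))
    have h3 : (∑ n ∈ Finset.range N, tm n) * ∑ n ∈ Finset.range N, tp n ≤
        (∑' n, tm n) * ∑' n, tp n := by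
      apply mul_le_mul (Summable.sum_le_tsum _ (fun n _ => hnm n) hsm)
        (Summable.sum_le_tsum _ (fun n _ => hnp n) hsp)
        (Finset.sum_nonneg fun n _ => hnp n) (tsum_nonneg hnm)
    linarith
  have htend : Filter.Tendsto (fun N => (∑ n ∈ Finset.range N, tb n) ^ 2) Filter.atTop
      (nhds ((∑' n, tb n) ^ 2)) :=
    (hsb.hasSum.tendsto_sum_nat).pow 2
  have := le_of_tendsto' htend partial_bound
  simpa [genHyp_eq] using this
end
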